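/- arXiv:1810.09795 — 3 statements merged into one kernel-verified Lean document; each statement's English description precedes it below -/
import Mathlib

section
/- Let N be a binary phylogenetic network containing a triangle on nodes t, s, r, i.e., edges (t,s), (t,r), (s,r), where s is a split node (indegree 1, outdegree 2) and r is a reticulation (indegree 2, outdegree 1). Then the directed graph N' obtained from N by deleting the edge (s,r) and adding the edge (r,s) is again a binary phylogenetic network (in particular, N' is acyclic, has no parallel edges, and every node has one of the allowed degree types). -/
noncomputable section

namespace Phylo

/-- In-degree of a vertex in a digraph given by an edge relation. -/
def indeg {V : Type} (E : V → V → Prop) (v : V) : ℕ := Nat.card {u // E u v}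

/-- Out-degree of a vertex in a digraph given by an edge relation. -/
def outdeg {V : Type} (E : V → V → Prop) (v : V) : ℕ := Nat.card {w // E v w}

def IsRoot {V : Type} (E : V → V → Prop) (v : V) : Prop := indeg E v = 0 ∧ outdeg E v = 1
def IsLeafNode {V : Type} (E : V → V → Prop) (v : V) : Prop := indeg E v = 1 ∧ outdeg E v = 0
def IsSplit {V : Type} (E : V → V → Prop) (v : V) : Prop := indeg E v = 1 ∧ outdeg E v = 2
def IsRetic {V : Type} (E : V → V → Prop) (v : V) : Prop := indeg E v = 2 ∧ outdeg E v = 1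

/-- A directed graph is acyclic if no vertex lies on a directed cycle. -/
def Acyclic {V : Type} (E : V → V → Prop) : Prop := ∀ v, ¬ Relation.TransGen E v v

/-- `(V, E)` together with the leaf-labelling `lab : X → V` is a binary phylogenetic
network on leaf set `X`: an acyclic digraph with a unique root (indeg 0, outdeg 1),
leaves (indeg 1, outdeg 0) bijectively labelled by `X`, and all other nodes split
nodes (indeg 1, outdeg 2) or reticulations (indeg 2, outdeg 1). -/
structure IsPhyloNet {V X : Type} [Fintype V] (E : V → V → Prop) (lab : X → V) : Prop where
  acyclic : Acyclic E
  root_unique : ∃! v, IsRoot E v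
  lab_inj : Function.Injective lab
  leaf_iff : ∀ v, IsLeafNode E v ↔ v ∈ Set.range lab
  node_types : ∀ v, IsRoot E v ∨ IsLeafNode E v ∨ IsSplit E v ∨ IsRetic E v

/-- The reticulation number of a digraph. -/
def reticCount {V : Type} (E : V → V → Prop) : ℕ := Nat.card {v // IsRetic E v}

/-- Labelled isomorphism of leaf-labelled digraphs. -/
def LabIso {V V' X : Type} (E : V → V → Prop) (lab : X → V)
    (E' : V' → V' → Prop) (lab' : X → V') : Prop :=
  ∃ φ : V ≃ V', (∀ a b, E a b ↔ E' (φ a) (φ b)) ∧ ∀ x, φ (lab x) = lab' x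

/-- Result of the head move of the edge `(u,v)` to the edge `(s,t)`, where `p` is the
other parent of the reticulation `v` and `c` its child.  The former head `v` is reused
as the node `v'` subdividing `(s,t)`: we delete `(u,v), (p,v), (v,c), (s,t)`, add
`(p,c)` (suppressing `v`), `(s,v), (v,t)` (subdividing `(s,t)` by `v' = v`), and the
new edge `(u,v') = (u,v)`. -/
def headMoveEdges {V : Type} (E : V → V → Prop) (u v p c s t : V) : V → V → Prop :=
  fun a b =>
    (E a b ∧ (a, b) ≠ (p, v) ∧ (a, b) ≠ (v, c) ∧ (a, b) ≠ (s, t) ∧ (a, b) ≠ (u, v))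
      ∨ (a, b) = (p, c) ∨ (a, b) = (s, v) ∨ (a, b) = (v, t) ∨ (a, b) = (u, v)

/-- Result of the tail move of the edge `(u,v)` to the edge `(s,t)`, where `p` is the
parent of the split node `u` and `c` its other child; `u` is reused as the node `u'`
subdividing `(s,t)`. -/
def tailMoveEdges {V : Type} (E : V → V → Prop) (u v p c s t : V) : V → V → Prop :=
  fun a b =>
    (E a b ∧ (a, b) ≠ (p, u) ∧ (a, b) ≠ (u, c) ∧ (a, b) ≠ (s, t) ∧ (a, b) ≠ (u, v))
      ∨ (a, b) = (p, c) ∨ (a, b) = (s, u) ∨ (a, b) = (u, t) ∨ (a, b) = (u, v)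

/-- A leaf-labelled digraph on a finite vertex set, the carrier for phylogenetic
networks on leaf set `X`. -/
structure Net (X : Type) where
  V : Type
  fin : Fintype V
  E : V → V → Prop
  lab : X → V

attribute [instance] Net.fin

/-- `N` is a binary phylogenetic network. -/
def Net.valid {X : Type} (N : Net X) : Prop := IsPhyloNet N.E N.lab

/-- Labelled isomorphism of two leaf-labelled digraphs. -/
def NetIso {X : Type} (N N' : Net X) : Prop := LabIso N.E N.lab N'.E N'.lab

/-- `N'` is obtained from `N` by one valid head move. -/
def HeadMoveStep {X : Type} (N N' : Net X) : Prop :=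
  N.valid ∧ N'.valid ∧ ∃ u v p c s t : N.V,
    N.E u v ∧ N.E p v ∧ p ≠ u ∧ N.E v c ∧ N.E s t ∧
    LabIso (headMoveEdges N.E u v p c s t) N.lab N'.E N'.lab

/-- `N'` is obtained from `N` by one valid tail move. -/
def TailMoveStep {X : Type} (N N' : Net X) : Prop :=
  N.valid ∧ N'.valid ∧ ∃ u v p c s t : N.V,
    N.E u v ∧ N.E p u ∧ N.E u c ∧ c ≠ v ∧ N.E s t ∧
    LabIso (tailMoveEdges N.E u v p c s t) N.lab N'.E N'.lab

/-- The digraph obtained by subdividing the edge `(s,t)` with a fresh node (`none`). -/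
def subdivEdge {V : Type} (E : V → V → Prop) (s t : V) : Option V → Option V → Prop
  | some a, some b => E a b ∧ (a, b) ≠ (s, t)
  | some a, none => a = s
  | none, some b => b = t
  | none, none => False

/-- `N'` is obtained from `N` by one valid distance-`d` head move: after subdividing
the target edge `(s,t)` with a new node `v'`, a shortest path from the old head `v`
to `v'` in the underlying undirected graph has length at most `d + 1`. -/
def HeadMoveStepD {X : Type} (d : ℕ) (N N' : Net X) : Prop :=
  N.valid ∧ N'.valid ∧ ∃ u v p c s t : N.V,
    N.E u v ∧ N.E p v ∧ p ≠ u ∧ N.E v c ∧ N.E s t ∧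
    (SimpleGraph.fromRel (subdivEdge N.E s t)).dist (some v) none ≤ d + 1 ∧
    LabIso (headMoveEdges N.E u v p c s t) N.lab N'.E N'.lab

/-- `N` and `N'` are connected by a finite sequence of `R`-moves (up to labelled
isomorphism, i.e. renaming of vertices). -/
def ConnectedBy {X : Type} (R : Net X → Net X → Prop) (N N' : Net X) : Prop :=
  Relation.ReflTransGen (fun A B => R A B ∨ NetIso A B) N N'

/-- `N'` can be reached from `N` by at most `n` `R`-moves (up to labelled isomorphism). -/
def stepsLE {X : Type} (R : Net X → Net X → Prop) : ℕ → Net X → Net X → Prop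
  | 0, N, N' => NetIso N N'
  | n + 1, N, N' => stepsLE R n N N' ∨ ∃ M, R N M ∧ stepsLE R n M N'

/-- `(V, E)` is a subdivision of `(W, F)` via the injection `φ`: every vertex outside
the image of `φ` is a redundant (indeg 1, outdeg 1) node, and `F a b` holds iff there
is an `E`-path from `φ a` to `φ b` all of whose internal vertices avoid the image. -/
def IsSubdivision {W V : Type} (F : W → W → Prop) (E : V → V → Prop) (φ : W → V) : Prop :=
  Function.Injective φ ∧
  (∀ v, v ∉ Set.range φ → indeg E v = 1 ∧ outdeg E v = 1) ∧
  (∀ a b, F a b ↔ ∃ l : List V,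
      List.Chain E (φ a) (l ++ [φ b]) ∧ ∀ x ∈ l, x ∉ Set.range φ)

/-- A rooted phylogenetic tree on `X`: a phylogenetic network with no reticulations. -/
def IsTree {X : Type} (T : Net X) : Prop := T.valid ∧ reticCount T.E = 0

/-- The tree `T` is embedded in `N`: some `X`-labelled subgraph of `N` is a
subdivision of `T`. -/
def EmbeddedTree {X : Type} (T N : Net X) : Prop :=
  IsTree T ∧ ∃ (E' : N.V → N.V → Prop) (φ : T.V → N.V),
    (∀ a b, E' a b → N.E a b) ∧ IsSubdivision T.E E' φ ∧ ∀ x, φ (T.lab x) = N.lab x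

/-- The digraph contains a triangle `t, s, r` with edges `(t,s), (t,r), (s,r)`. -/
def HasTriangle {V : Type} (E : V → V → Prop) : Prop :=
  ∃ t s r, E t s ∧ E t r ∧ E s r

/-- The network has `k` reticulations at the top, with nodes `c` (child of the root),
`a i`, `b i` for `1 ≤ i ≤ k`. -/
def ReticsAtTop {V : Type} (E : V → V → Prop) (k : ℕ) (c : V) (a b : ℕ → V) : Prop :=
  (∃ ρ, IsRoot E ρ ∧ E ρ c) ∧ E c (a 1) ∧ E c (b 1) ∧
  (∀ i, 1 ≤ i → i ≤ k → E (a i) (b i) ∧ IsSplit E (a i) ∧ IsRetic E (b i)) ∧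
  (∀ i, 1 ≤ i → i < k →
    ((E (a i) (a (i + 1)) ∧ E (b i) (b (i + 1))) ∨
     (E (a i) (b (i + 1)) ∧ E (b i) (a (i + 1)))))

/-- The network has `k` reticulations neatly at the top. -/
def NeatlyAtTop {V : Type} (E : V → V → Prop) (k : ℕ) (c : V) (a b : ℕ → V) : Prop :=
  (∃ ρ, IsRoot E ρ ∧ E ρ c) ∧ E c (a 1) ∧ E c (b 1) ∧
  (∀ i, 1 ≤ i → i ≤ k → E (a i) (b i) ∧ IsSplit E (a i) ∧ IsRetic E (b i)) ∧
  (∀ i, 1 ≤ i → i < k → E (a i) (a (i + 1)) ∧ E (b i) (b (i + 1)))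


private lemma aux_transGen_union {V : Type} {F : V → V → Prop} {r s : V} {x y : V}
    (h : Relation.TransGen (fun a b => F a b ∨ (a, b) = (r, s)) x y) :
    Relation.TransGen F x y ∨
      (Relation.ReflTransGen F x r ∧ Relation.ReflTransGen F s y) := by
  induction h with
  | single h =>
    rcases h with h | h
    · exact Or.inl (Relation.TransGen.single h)
    · obtain ⟨rfl, rfl⟩ := Prod.mk.injEq .. ▸ h
      exact Or.inr ⟨Relation.ReflTransGen.refl, Relation.ReflTransGen.refl⟩
  | tail h' hlast ih =>
    rcases ih with ih | ⟨h1, h2⟩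
    · rcases hlast with hF | hE
      · exact Or.inl (ih.tail hF)
      · obtain ⟨rfl, rfl⟩ := Prod.mk.injEq .. ▸ hE
        exact Or.inr ⟨ih.to_reflTransGen, Relation.ReflTransGen.refl⟩
    · rcases hlast with hF | hE
      · exact Or.inr ⟨h1, h2.tail hF⟩
      · obtain ⟨rfl, rfl⟩ := Prod.mk.injEq .. ▸ hE
        exact Or.inr ⟨h1, Relation.ReflTransGen.refl⟩

private lemma aux_indeg_eq {V : Type} (E : V → V → Prop) (v : V) :
    indeg E v = Set.ncard {u | E u v} := Nat.card_coe_set_eq _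

private lemma aux_outdeg_eq {V : Type} (E : V → V → Prop) (v : V) :
    outdeg E v = Set.ncard {w | E v w} := Nat.card_coe_set_eq _

/-- reversing the side edge `(s,r)` of a triangle `t, s, r` (with `s` a
split node and `r` a reticulation) yields again a binary phylogenetic network. -/
theorem triangle_reversal {V X : Type} [Fintype V] (E : V → V → Prop) (lab : X → V)
    (t s r : V) (hN : IsPhyloNet E lab) (hts : E t s) (htr : E t r) (hsr : E s r)
    (hs : IsSplit E s) (hr : IsRetic E r) :
    IsPhyloNet (fun a b => (E a b ∧ (a, b) ≠ (s, r)) ∨ (a, b) = (r, s)) lab := by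
  set E' : V → V → Prop :=
    fun a b => (E a b ∧ (a, b) ≠ (s, r)) ∨ (a, b) = (r, s) with hE'
  -- basic non-loop facts
  have noloop : ∀ a, ¬ E a a := fun a h => hN.acyclic a (Relation.TransGen.single h)
  have hsr' : s ≠ r := fun h => noloop s (by rw [h] at hsr ⊢; exact hsr)
  have hts' : t ≠ s := fun h => noloop t (by nth_rewrite 2 [h]; exact hts)
  have htr' : t ≠ r := fun h => noloop t (by nth_rewrite 2 [h]; exact htr)
  -- the unique parent of s is t
  have parent_s : ∀ u, E u s → u = t := by
    intro u hu
    obtain ⟨hss, -⟩ := Nat.card_eq_one_iff_unique.mp hs.1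
    exact congrArg Subtype.val (hss.elim (⟨u, hu⟩ : {u // E u s}) ⟨t, hts⟩)
  -- the parents of r are exactly t and s
  have parent_r : ∀ u, E u r → u ≠ s → u = t := by
    intro u hu hus
    obtain ⟨y, -, hy⟩ := (Nat.card_eq_two_iff' (⟨s, hsr⟩ : {u // E u r})).mp hr.1
    have h1 : (⟨u, hu⟩ : {u // E u r}) = y := hy _ (fun h => hus (congrArg Subtype.val h))
    have h2 : (⟨t, htr⟩ : {u // E u r}) = y := hy _ (fun h => hts' (congrArg Subtype.val h))
    exact congrArg Subtype.val (h1.trans h2.symm)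
  -- the unique child of r
  obtain ⟨hsubz, ⟨z0⟩⟩ := Nat.card_eq_one_iff_unique.mp hr.2
  obtain ⟨z, hz⟩ := z0
  have child_r : ∀ w, E r w → w = z := by
    intro w hw
    exact congrArg Subtype.val (hsubz.elim (⟨w, hw⟩ : {w // E r w}) ⟨z, hz⟩)
  have hzs : z ≠ s := by
    intro h
    rw [h] at hz
    exact hN.acyclic s (Relation.TransGen.tail (Relation.TransGen.single hsr) hz)
  -- the other child of s
  obtain ⟨y0, hy0, hy0u⟩ := (Nat.card_eq_two_iff' (⟨r, hsr⟩ : {w // E s w})).mp hs.2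
  obtain ⟨zs, hzs'⟩ := y0
  have hzsr : zs ≠ r := fun h => hy0 (by exact Subtype.ext h)
  have child_s : ∀ w, E s w → w ≠ r → w = zs := by
    intro w hw hwr
    exact congrArg Subtype.val (hy0u ⟨w, hw⟩ (fun h => hwr (congrArg Subtype.val h)))
  -- degree computations in E'
  have hins : indeg E' s = 2 := by
    have hset : {u | E' u s} = {t, r} := by
      ext u
      simp only [Set.mem_setOf_eq, Set.mem_insert_iff, Set.mem_singleton_iff, hE']
      constructor
      · rintro (⟨hu, -⟩ | h)
        · exact Or.inl (parent_s u hu)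
        · exact Or.inr (congrArg Prod.fst h)
      · rintro (rfl | rfl)
        · exact Or.inl ⟨hts, fun h => hsr' (congrArg Prod.snd h)⟩
        · exact Or.inr rfl
    rw [aux_indeg_eq, hset, Set.ncard_pair htr']
  have houts : outdeg E' s = 1 := by
    have hset : {w | E' s w} = {zs} := by
      ext w
      simp only [Set.mem_setOf_eq, Set.mem_singleton_iff, hE']
      constructor
      · rintro (⟨hw, hne⟩ | h)
        · exact child_s w hw (fun h => hne (by rw [h]))
        · exact absurd (congrArg Prod.fst h) hsr'
      · rintro rfl
        exact Or.inl ⟨hzs', fun h => hzsr (congrArg Prod.snd h)⟩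
    rw [aux_outdeg_eq, hset, Set.ncard_singleton]
  have hinr : indeg E' r = 1 := by
    have hset : {u | E' u r} = {t} := by
      ext u
      simp only [Set.mem_setOf_eq, Set.mem_singleton_iff, hE']
      constructor
      · rintro (⟨hu, hne⟩ | h)
        · exact parent_r u hu (fun h => hne (by rw [h]))
        · exact absurd (congrArg Prod.snd h).symm hsr'
      · rintro rfl
        exact Or.inl ⟨htr, fun h => hts' (congrArg Prod.fst h)⟩
    rw [aux_indeg_eq, hset, Set.ncard_singleton]
  have houtr : outdeg E' r = 2 := by
    have hset : {w | E' r w} = {z, s} := by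
      ext w
      simp only [Set.mem_setOf_eq, Set.mem_insert_iff, Set.mem_singleton_iff, hE']
      constructor
      · rintro (⟨hw, -⟩ | h)
        · exact Or.inl (child_r w hw)
        · exact Or.inr (congrArg Prod.snd h)
      · rintro (rfl | rfl)
        · exact Or.inl ⟨hz, fun h => hsr' (congrArg Prod.fst h).symm⟩
        · exact Or.inr rfl
    rw [aux_outdeg_eq, hset, Set.ncard_pair hzs]
  -- degrees unchanged elsewhere
  have hiniff : ∀ v, v ≠ s → v ≠ r → ∀ u, E' u v ↔ E u v := by
    intro v hvs hvr u
    constructor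
    · rintro (⟨h, -⟩ | h)
      · exact h
      · exact absurd (congrArg Prod.snd h) hvs
    · exact fun h => Or.inl ⟨h, fun he => hvr (congrArg Prod.snd he)⟩
  have houtiff : ∀ v, v ≠ s → v ≠ r → ∀ w, E' v w ↔ E v w := by
    intro v hvs hvr w
    constructor
    · rintro (⟨h, -⟩ | h)
      · exact h
      · exact absurd (congrArg Prod.fst h) hvr
    · exact fun h => Or.inl ⟨h, fun he => hvs (congrArg Prod.fst he)⟩
  have hin : ∀ v, v ≠ s → v ≠ r → indeg E' v = indeg E v := fun v h1 h2 =>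
    Nat.card_congr (Equiv.subtypeEquivRight (hiniff v h1 h2))
  have hout : ∀ v, v ≠ s → v ≠ r → outdeg E' v = outdeg E v := fun v h1 h2 =>
    Nat.card_congr (Equiv.subtypeEquivRight (houtiff v h1 h2))
  -- acyclicity
  have hacyc : Acyclic E' := by
    intro v hv
    rcases aux_transGen_union hv with h | ⟨h1, h2⟩
    · exact hN.acyclic v (Relation.TransGen.mono (fun a b hab => hab.1) _ _ h)
    · have h3 := h2.trans h1
      rcases Relation.reflTransGen_iff_eq_or_transGen.mp h3 with h4 | h4
      · exact hsr' h4.symm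
      · -- a path from s to r avoiding (s,r) is impossible
        cases h4 with
        | single h => exact h.2 rfl
        | tail h' hlast =>
          have hw : _ = t := parent_r _ hlast.1 (fun he => hlast.2 (by rw [he]))
          rw [hw] at h'
          have : Relation.TransGen E s t := Relation.TransGen.mono (fun a b hab => hab.1) _ _ h'
          exact hN.acyclic s (this.tail hts)
  refine ⟨hacyc, ?_, hN.lab_inj, ?_, ?_⟩
  · -- unique root
    obtain ⟨ρ, hρ, huniq⟩ := hN.root_unique
    have hρs : ρ ≠ s := fun h => by
      have h0 := hρ.1; rw [h, hs.1] at h0; exact one_ne_zero h0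
    have hρr : ρ ≠ r := fun h => by
      have h0 := hρ.1; rw [h, hr.1] at h0; exact two_ne_zero h0
    refine ⟨ρ, ⟨by rw [hin ρ hρs hρr]; exact hρ.1, by rw [hout ρ hρs hρr]; exact hρ.2⟩, ?_⟩
    intro v hv
    have hvs : v ≠ s := fun h => by
      have h0 := hv.1; rw [h, hins] at h0; exact two_ne_zero h0
    have hvr : v ≠ r := fun h => by
      have h0 := hv.1; rw [h, hinr] at h0; exact one_ne_zero h0
    exact huniq v ⟨by rw [← hin v hvs hvr]; exact hv.1, by rw [← hout v hvs hvr]; exact hv.2⟩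
  · -- leaf characterization
    intro v
    by_cases hvs : v = s
    · subst hvs
      constructor
      · intro hv
        have h0 := hv.1; rw [hins] at h0; exact absurd h0 (by norm_num)
      · intro hv
        have h0 := ((hN.leaf_iff v).mpr hv).2
        rw [hs.2] at h0; exact absurd h0 (by norm_num)
    · by_cases hvr : v = r
      · subst hvr
        constructor
        · intro hv
          have h0 := hv.2; rw [houtr] at h0; exact absurd h0 (by norm_num)
        · intro hv
          have h0 := ((hN.leaf_iff v).mpr hv).1
          rw [hr.1] at h0; exact absurd h0 (by norm_num)
      · rw [show IsLeafNode E' v ↔ IsLeafNode E v from by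
          unfold IsLeafNode; rw [hin v hvs hvr, hout v hvs hvr]]
        exact hN.leaf_iff v
  · -- node types
    intro v
    by_cases hvs : v = s
    · subst hvs; exact Or.inr (Or.inr (Or.inr ⟨hins, houts⟩))
    · by_cases hvr : v = r
      · subst hvr; exact Or.inr (Or.inr (Or.inl ⟨hinr, houtr⟩))
      · have h1 := hin v hvs hvr
        have h2 := hout v hvs hvr
        rcases hN.node_types v with h | h | h | h
        · exact Or.inl ⟨h1.trans h.1, h2.trans h.2⟩
        · exact Or.inr (Or.inl ⟨h1.trans h.1, h2.trans h.2⟩)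
        · exact Or.inr (Or.inr (Or.inl ⟨h1.trans h.1, h2.trans h.2⟩))
        · exact Or.inr (Or.inr (Or.inr ⟨h1.trans h.1, h2.trans h.2⟩))

end Phylo
end
end

section
/- Every binary phylogenetic network with reticulation number 1 (a tier-1 network) has at most two embedded trees, and if a tier-1 network contains a triangle, then it has exactly one embedded tree. -/
noncomputable section

namespace Phylo

section Generic
variable {V : Type} {R : V → V → Prop} {Im : V → Prop}

lemma chain'_eq (a : V) (l : List V) : List.Chain R a l ↔ List.Chain' R (a :: l) := Iff.rfl

lemma chain_flip {a b : V} {l : List V} :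
    List.Chain R a (l ++ [b]) ↔ List.Chain (flip R) b (l.reverse ++ [a]) := by
  show List.IsChain R (a :: (l ++ [b])) ↔ List.IsChain (flip R) (b :: (l.reverse ++ [a]))
  rw [show b :: (l.reverse ++ [a]) = (a :: (l ++ [b])).reverse by simp, List.isChain_reverse]
  rfl

lemma chain_unique (hdet : ∀ x, ¬ Im x → ∀ w w', R x w → R x w' → w = w') :
    ∀ (l₁ l₂ : List V) (v e₁ e₂ : V),
      (∀ w w', R v w → R v w' → w = w') → Im e₁ → Im e₂ →
      List.Chain R v (l₁ ++ [e₁]) → List.Chain R v (l₂ ++ [e₂]) →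
      (∀ x ∈ l₁, ¬ Im x) → (∀ x ∈ l₂, ¬ Im x) → l₁ = l₂ ∧ e₁ = e₂ := by
  intro l₁
  induction l₁ with
  | nil =>
    intro l₂ v e₁ e₂ hv h1 h2 c1 c2 m1 m2
    cases l₂ with
    | nil =>
      simp only [List.nil_append, List.Chain, List.isChain_cons_cons] at c1 c2
      exact ⟨rfl, hv _ _ c1.1 c2.1⟩
    | cons x l₂ =>
      simp only [List.nil_append, List.cons_append, List.Chain, List.isChain_cons_cons] at c1 c2
      have : e₁ = x := hv _ _ c1.1 c2.1
      exact absurd (this ▸ h1) (m2 x (by simp))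
  | cons x l₁ ih =>
    intro l₂ v e₁ e₂ hv h1 h2 c1 c2 m1 m2
    cases l₂ with
    | nil =>
      simp only [List.nil_append, List.cons_append, List.Chain, List.isChain_cons_cons] at c1 c2
      have : x = e₂ := hv _ _ c1.1 c2.1
      exact absurd (this ▸ m1 x (by simp)) (not_not_intro h2)
    | cons y l₂ =>
      simp only [List.cons_append, List.Chain, List.isChain_cons_cons] at c1 c2
      have hxy : x = y := hv _ _ c1.1 c2.1
      subst hxy
      have hx : ¬ Im x := m1 x (by simp)
      obtain ⟨h, h'⟩ := ih l₂ x e₁ e₂ (hdet x hx) h1 h2 c1.2 c2.2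
        (fun z hz => m1 z (by simp [hz])) (fun z hz => m2 z (by simp [hz]))
      exact ⟨by rw [h], h'⟩

lemma acyclic_wf [Finite V] (hacyc : ∀ v, ¬ Relation.TransGen R v v) :
    WellFounded (fun w v => R v w) := by
  have : IsTrans V (Relation.TransGen (Function.swap R)) := ⟨fun a b c => Relation.TransGen.trans⟩
  have : IsIrrefl V (Relation.TransGen (Function.swap R)) :=
    ⟨fun a h => hacyc a (Relation.transGen_swap.1 h)⟩
  have hwf := Finite.wellFounded_of_trans_of_irrefl (Relation.TransGen (Function.swap R))
  exact Subrelation.wf (r := Relation.TransGen (Function.swap R))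
    (fun {a b} h => Relation.TransGen.single h) hwf

lemma chain_exists [Finite V] (hacyc : ∀ v, ¬ Relation.TransGen R v v)
    (hsucc : ∀ x, ¬ Im x → ∃ w, R x w) :
    ∀ v, ¬ Im v → ∃ (l : List V) (e : V), Im e ∧ List.Chain R v (l ++ [e]) ∧ ∀ x ∈ l, ¬ Im x := by
  intro v
  induction v using (acyclic_wf hacyc).induction with
  | _ v ih =>
    intro hv
    obtain ⟨w, hw⟩ := hsucc v hv
    by_cases hwim : Im w
    · exact ⟨[], w, hwim, by simpa using List.Chain.cons hw List.Chain.nil, by simp⟩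
    · obtain ⟨l, e, h1, h2, h3⟩ := ih w hw hwim
      refine ⟨w :: l, e, h1, by simpa using List.Chain.cons hw h2, fun x hx => ?_⟩
      rcases List.mem_cons.1 hx with h | h
      · exact h ▸ hwim
      · exact h3 x h

lemma card_le_of_imp {p q : V → Prop} [Finite V] (h : ∀ v, p v → q v) :
    Nat.card {v // p v} ≤ Nat.card {v // q v} :=
  Nat.card_le_card_of_injective (fun x => ⟨x.1, h _ x.2⟩) (by
    intro a b hab
    simp only [Subtype.mk.injEq] at hab
    exact Subtype.ext hab)

lemma card_zero_iff {p : V → Prop} [Finite V] : Nat.card {v // p v} = 0 ↔ ∀ v, ¬ p v := by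
  rw [Nat.card_eq_zero]
  constructor
  · rintro (h | h) v hv
    · exact h.elim ⟨v, hv⟩
    · have : Infinite {v // p v} := h
      exact (not_finite {v // p v}).elim
  · intro h; exact Or.inl ⟨fun x => h x.1 x.2⟩

lemma unique_of_card_one {p : V → Prop} (h : Nat.card {v // p v} = 1) : ∃! v, p v := by
  obtain ⟨hs, ⟨x⟩⟩ := Nat.card_eq_one_iff_unique.1 h
  exact ⟨x.1, x.2, fun y hy => congrArg Subtype.val (hs.elim ⟨y, hy⟩ x)⟩

lemma card_one_of_unique {p : V → Prop} (h : ∃! v, p v) : Nat.card {v // p v} = 1 := by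
  obtain ⟨x, hx, hu⟩ := h
  exact Nat.card_eq_one_iff_unique.2
    ⟨⟨fun a b => Subtype.ext ((hu a.1 a.2).trans (hu b.1 b.2).symm)⟩, ⟨⟨x, hx⟩⟩⟩

lemma card_le_one_of_subsingleton {p : V → Prop} [Finite V]
    (h : ∀ a b, p a → p b → a = b) : Nat.card {v // p v} ≤ 1 := by
  have : Subsingleton {v // p v} := ⟨fun a b => Subtype.ext (h _ _ a.2 b.2)⟩
  by_cases hne : Nonempty {v // p v}
  · exact le_of_eq Nat.card_unique
  · have : IsEmpty {v // p v} := not_nonempty_iff.1 hne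
    rw [Nat.card_of_isEmpty]; omega

lemma two_elems {p : V → Prop} (h : Nat.card {v // p v} = 2) :
    ∃ a b, a ≠ b ∧ p a ∧ p b ∧ ∀ c, p c → c = a ∨ c = b := by
  obtain ⟨x, y, hxy, huniv⟩ := Nat.card_eq_two_iff.1 h
  refine ⟨x.1, y.1, fun hh => hxy (Subtype.ext hh), x.2, y.2, fun c hc => ?_⟩
  have : (⟨c, hc⟩ : {v // p v}) ∈ ({x, y} : Set {v // p v}) := by rw [huniv]; trivial
  rcases this with h | h
  · exact Or.inl (congrArg Subtype.val h)
  · exact Or.inr (congrArg Subtype.val h)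

lemma exists_of_card_pos {p : V → Prop} (h : 1 ≤ Nat.card {v // p v}) : ∃ v, p v := by
  have := Nat.card_pos_iff.1 (Nat.lt_of_lt_of_le Nat.zero_lt_one h)
  obtain ⟨⟨x, hx⟩⟩ := this.1
  exact ⟨x, hx⟩

lemma rel_eq_of_card {p q : V → Prop} [Finite V] (h : ∀ v, p v → q v)
    (hc : Nat.card {v // q v} ≤ Nat.card {v // p v}) : ∀ v, q v → p v := by
  have h1 : {v | p v} ⊆ {v | q v} := h
  have h2 : Set.ncard {v | q v} ≤ Set.ncard {v | p v} := by
    rw [← Nat.card_coe_set_eq, ← Nat.card_coe_set_eq]; exact hc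
  have heq := Set.eq_of_subset_of_ncard_le h1 h2 (Set.toFinite _)
  intro v hv
  have : v ∈ {v | p v} := heq ▸ (hv : v ∈ {v | q v})
  exact this

end Generic

section Generic2
variable {V : Type} {p : V → Prop}

lemma one_le_card [Finite V] {a : V} (ha : p a) : 1 ≤ Nat.card {v // p v} :=
  Nat.card_pos_iff.2 ⟨⟨⟨a, ha⟩⟩, inferInstance⟩

lemma two_le_card [Finite V] {a b : V} (hab : a ≠ b) (ha : p a) (hb : p b) :
    2 ≤ Nat.card {v // p v} := by
  have : Nontrivial {v // p v} := ⟨⟨a, ha⟩, ⟨b, hb⟩, fun h => hab (Subtype.ext_iff.1 h)⟩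
  exact Finite.one_lt_card_iff_nontrivial.2 this

lemma two_of_card [Finite V] (h : 2 ≤ Nat.card {v // p v}) :
    ∃ a b, a ≠ b ∧ p a ∧ p b := by
  have : Nontrivial {v // p v} := Finite.one_lt_card_iff_nontrivial.1 h
  obtain ⟨⟨a, ha⟩, ⟨b, hb⟩, hab⟩ := this
  exact ⟨a, b, fun h => hab (Subtype.ext h), ha, hb⟩

lemma eq_of_card_le_one [Finite V] (h : Nat.card {v // p v} ≤ 1) :
    ∀ a b, p a → p b → a = b := by
  intro a b ha hb
  by_contra hab
  have := two_le_card hab ha hb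
  omega

lemma pair_of_card_two [Finite V] {x y : V} (h : Nat.card {v // p v} = 2)
    (hx : p x) (hy : p y) (hxy : x ≠ y) : ∀ c, p c → c = x ∨ c = y := by
  obtain ⟨a, b, hab, _, _, hall⟩ := two_elems h
  intro c hc
  rcases hall x hx with h1 | h1 <;> rcases hall y hy with h2 | h2 <;>
    rcases hall c hc with h3 | h3 <;> subst_vars <;> simp_all

end Generic2

section Generic3
variable {V : Type}

lemma card_eq_two_of {p : V → Prop} [Finite V] {x y : V} (hxy : x ≠ y) (hx : p x) (hy : p y)
    (hall : ∀ c, p c → c = x ∨ c = y) : Nat.card {v // p v} = 2 := by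
  refine Nat.card_eq_two_iff.2 ⟨⟨x, hx⟩, ⟨y, hy⟩, fun h => hxy (Subtype.ext_iff.1 h), ?_⟩
  refine Set.eq_univ_of_forall (fun z => ?_)
  rcases hall z.1 z.2 with h | h
  · exact Or.inl (Subtype.ext h)
  · exact Or.inr (Subtype.ext h)

lemma card_val_eq {pr : V → Prop} {P : {v : V // pr v} → Prop} {q : V → Prop}
    (hiff : ∀ u, P u ↔ q u.1) (hq : ∀ u, q u → pr u) :
    Nat.card {u : {v // pr v} // P u} = Nat.card {u : V // q u} :=
  Nat.card_congr
    ⟨fun u => ⟨u.1.1, (hiff _).1 u.2⟩, fun u => ⟨⟨u.1, hq _ u.2⟩, (hiff _).2 u.2⟩,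
     fun u => Subtype.ext (Subtype.ext rfl), fun u => Subtype.ext rfl⟩

end Generic3

section Generic4
variable {V : Type}

lemma pick_other {p : V → Prop} [Finite V] {w : V} (hw : p w) (h2 : Nat.card {v // p v} = 2) :
    ∃ d, p d ∧ d ≠ w ∧ ∀ c, p c → c = w ∨ c = d := by
  obtain ⟨a, b, hab, ha, hb, _⟩ := two_elems h2
  have hall := pair_of_card_two h2 ha hb hab
  rcases hall w hw with h | h
  · refine ⟨b, hb, fun hh => hab ((hh.trans h).symm), fun c hc => ?_⟩
    rcases hall c hc with g | g
    · exact Or.inl (g.trans h.symm)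
    · exact Or.inr g
  · refine ⟨a, ha, fun hh => hab (hh.trans h), fun c hc => ?_⟩
    rcases hall c hc with g | g
    · exact Or.inr g
    · exact Or.inl (g.trans h.symm)

end Generic4
section Reaching
variable {X : Type} {N T : Net X}

lemma transGen_lift {V W : Type} {R : V → V → Prop} {S : W → W → Prop} (f : V → W)
    (h : ∀ a b, R a b → Relation.TransGen S (f a) (f b)) :
    ∀ {a b}, Relation.TransGen R a b → Relation.TransGen S (f a) (f b) := by
  intro a b hab
  induction hab with
  | single h' => exact h _ _ h'
  | tail _ h' ih => exact ih.trans (h _ _ h')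

/-- Embedding data for an embedded tree. -/
structure Emb (N T : Net X) where
  E' : N.V → N.V → Prop
  φ : T.V → N.V
  sub : ∀ a b, E' a b → N.E a b
  div : IsSubdivision T.E E' φ
  flab : ∀ x, φ (T.lab x) = N.lab x

variable (D : Emb N T)

lemma Emb.acyc (hN : N.valid) : Acyclic D.E' :=
  fun v h => hN.acyclic v (Relation.TransGen.mono D.sub _ _ h)

lemma Emb.nonim (v : N.V) (hv : v ∉ Set.range D.φ) :
    indeg D.E' v = 1 ∧ outdeg D.E' v = 1 := D.div.2.1 v hv

lemma Emb.det_fwd {x : N.V} (hx : x ∉ Set.range D.φ) :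
    ∀ w w', D.E' x w → D.E' x w' → w = w' := by
  obtain ⟨u, _, hu⟩ := unique_of_card_one (D.nonim x hx).2
  intro w w' h h'
  rw [hu w h, hu w' h']

lemma Emb.det_bwd {x : N.V} (hx : x ∉ Set.range D.φ) :
    ∀ w w', D.E' w x → D.E' w' x → w = w' := by
  obtain ⟨u, _, hu⟩ := unique_of_card_one (D.nonim x hx).1
  intro w w' h h'
  rw [hu w h, hu w' h']

lemma Emb.succ_ex {x : N.V} (hx : x ∉ Set.range D.φ) : ∃ w, D.E' x w := by
  obtain ⟨u, hu, _⟩ := unique_of_card_one (D.nonim x hx).2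
  exact ⟨u, hu⟩

lemma Emb.pred_ex {x : N.V} (hx : x ∉ Set.range D.φ) : ∃ w, D.E' w x := by
  obtain ⟨u, hu, _⟩ := unique_of_card_one (D.nonim x hx).1
  exact ⟨u, hu⟩

/-- `b` is the image vertex at the end of the forced forward path from `w`. -/
def Emb.Reach (w : N.V) (b : T.V) : Prop :=
  w = D.φ b ∨ (w ∉ Set.range D.φ ∧
    ∃ l, List.Chain D.E' w (l ++ [D.φ b]) ∧ ∀ x ∈ l, x ∉ Set.range D.φ)

/-- `a` is the image vertex at the start of the forced backward path from `w`. -/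
def Emb.CoReach (w : N.V) (a : T.V) : Prop :=
  w = D.φ a ∨ (w ∉ Set.range D.φ ∧
    ∃ l, List.Chain D.E' (D.φ a) (l ++ [w]) ∧ ∀ x ∈ l, x ∉ Set.range D.φ)

lemma Emb.reach_ex (hN : N.valid) (w : N.V) : ∃ b, D.Reach w b := by
  by_cases hw : w ∈ Set.range D.φ
  · obtain ⟨b, hb⟩ := hw
    exact ⟨b, Or.inl hb.symm⟩
  · obtain ⟨l, e, he, hc, hl⟩ := chain_exists (Im := (· ∈ Set.range D.φ)) (D.acyc hN)
      (fun x hx => D.succ_ex hx) w hw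
    obtain ⟨b, hb⟩ := he
    exact ⟨b, Or.inr ⟨hw, l, hb ▸ hc, hl⟩⟩

lemma Emb.coreach_ex (hN : N.valid) (w : N.V) : ∃ a, D.CoReach w a := by
  by_cases hw : w ∈ Set.range D.φ
  · obtain ⟨b, hb⟩ := hw
    exact ⟨b, Or.inl hb.symm⟩
  · have hacyc : ∀ v, ¬ Relation.TransGen (flip D.E') v v := by
      intro v h
      exact D.acyc hN v (Relation.transGen_swap.1 h)
    obtain ⟨l, e, he, hc, hl⟩ := chain_exists (Im := (· ∈ Set.range D.φ)) hacyc
      (fun x hx => D.pred_ex hx) w hw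
    obtain ⟨a, ha⟩ := he
    refine ⟨a, Or.inr ⟨hw, l.reverse, ?_, fun x hx => hl x (by simpa using hx)⟩⟩
    have := chain_flip.1 (ha ▸ hc : List.Chain (flip D.E') w (l ++ [D.φ a]))
    simpa using this

lemma Emb.reach_unique {w : N.V} {b₁ b₂ : T.V} (h1 : D.Reach w b₁) (h2 : D.Reach w b₂) :
    b₁ = b₂ := by
  rcases h1 with h1 | ⟨hw, l₁, c1, m1⟩
  · rcases h2 with h2 | ⟨hw, _, _, _⟩
    · exact D.div.1 (h1 ▸ h2)
    · exact absurd ⟨b₁, h1.symm⟩ hw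
  · rcases h2 with h2 | ⟨_, l₂, c2, m2⟩
    · exact absurd ⟨b₂, h2.symm⟩ hw
    · have := chain_unique (Im := (· ∈ Set.range D.φ))
        (fun x hx => D.det_fwd hx) l₁ l₂ w _ _ (D.det_fwd hw)
        ⟨b₁, rfl⟩ ⟨b₂, rfl⟩ c1 c2 m1 m2
      exact D.div.1 this.2

lemma Emb.coreach_unique {w : N.V} {a₁ a₂ : T.V} (h1 : D.CoReach w a₁) (h2 : D.CoReach w a₂) :
    a₁ = a₂ := by
  rcases h1 with h1 | ⟨hw, l₁, c1, m1⟩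
  · rcases h2 with h2 | ⟨hw, _, _, _⟩
    · exact D.div.1 (h1 ▸ h2)
    · exact absurd ⟨a₁, h1.symm⟩ hw
  · rcases h2 with h2 | ⟨_, l₂, c2, m2⟩
    · exact absurd ⟨a₂, h2.symm⟩ hw
    · have f1 : List.Chain (flip D.E') w (l₁.reverse ++ [D.φ a₁]) := chain_flip.1 c1
      have f2 : List.Chain (flip D.E') w (l₂.reverse ++ [D.φ a₂]) := chain_flip.1 c2
      have := chain_unique (Im := (· ∈ Set.range D.φ))
        (fun x hx => D.det_bwd hx) l₁.reverse l₂.reverse w _ _ (D.det_bwd hw)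
        ⟨a₁, rfl⟩ ⟨a₂, rfl⟩ f1 f2 (fun x hx => m1 x (by simpa using hx))
        (fun x hx => m2 x (by simpa using hx))
      exact D.div.1 this.2

lemma Emb.F_iff_reach (a b : T.V) :
    T.E a b ↔ ∃ w, D.E' (D.φ a) w ∧ D.Reach w b := by
  rw [(D.div.2.2 a b)]
  constructor
  · rintro ⟨l, hc, hm⟩
    cases l with
    | nil =>
      simp only [List.nil_append, List.Chain, List.isChain_cons_cons] at hc
      exact ⟨D.φ b, hc.1, Or.inl rfl⟩
    | cons x l' =>
      simp only [List.cons_append, List.Chain, List.isChain_cons_cons] at hc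
      exact ⟨x, hc.1, Or.inr ⟨hm x (by simp), l', hc.2, fun y hy => hm y (by simp [hy])⟩⟩
  · rintro ⟨w, hw, hr | ⟨hwim, l, hc, hm⟩⟩
    · exact ⟨[], by simpa using List.Chain.cons (hr ▸ hw) List.Chain.nil, by simp⟩
    · exact ⟨w :: l, by simpa using List.Chain.cons hw hc,
        fun x hx => by rcases List.mem_cons.1 hx with h | h
                       · exact h ▸ hwim
                       · exact hm x h⟩

lemma Emb.F_iff_coreach (a b : T.V) :
    T.E a b ↔ ∃ w, D.E' w (D.φ b) ∧ D.CoReach w a := by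
  rw [(D.div.2.2 a b)]
  constructor
  · rintro ⟨l, hc, hm⟩
    have hf : List.Chain (flip D.E') (D.φ b) (l.reverse ++ [D.φ a]) := chain_flip.1 hc
    cases hrev : l.reverse with
    | nil =>
      rw [hrev] at hf
      simp only [List.nil_append, List.Chain, List.isChain_cons_cons] at hf
      exact ⟨D.φ a, hf.1, Or.inl rfl⟩
    | cons x l₂ =>
      rw [hrev] at hf
      simp only [List.cons_append, List.Chain, List.isChain_cons_cons] at hf
      have hxl : x ∈ l := by
        have : x ∈ l.reverse := by rw [hrev]; simp
        simpa using this
      refine ⟨x, hf.1, Or.inr ⟨hm x hxl, l₂.reverse, ?_, fun y hy => hm y ?_⟩⟩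
      · have := chain_flip.2 (by simpa [List.Chain] using hf.2 : List.Chain (flip D.E') x ((l₂.reverse).reverse ++ [D.φ a]))
        simpa using this
      · have : y ∈ l.reverse := by rw [hrev]; simp [List.mem_reverse.1 hy]
        simpa using this
  · rintro ⟨w, hw, hr | ⟨hwim, l, hc, hm⟩⟩
    · exact ⟨[], by simpa using List.Chain.cons (hr ▸ hw : D.E' (D.φ a) (D.φ b)) List.Chain.nil, by simp⟩
    · refine ⟨l ++ [w], ?_, fun x hx => ?_⟩
      · rw [chain_flip]
        have : List.Chain (flip D.E') w (l.reverse ++ [D.φ a]) := chain_flip.1 hc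
        simpa using List.Chain.cons (show flip D.E' (D.φ b) w from hw) this
      · rcases List.mem_append.1 hx with h | h
        · exact hm x h
        · rw [List.mem_singleton.1 h]; exact hwim

end Reaching
section Degrees
variable {X : Type} {N T : Net X} (D : Emb N T)

lemma Emb.indeg_le_N (v : N.V) : indeg D.E' v ≤ indeg N.E v :=
  card_le_of_imp (fun u h => D.sub u v h)

lemma Emb.outdeg_le_N (v : N.V) : outdeg D.E' v ≤ outdeg N.E v :=
  card_le_of_imp (fun u h => D.sub v u h)

lemma Emb.outdeg_le (a : T.V) : outdeg T.E a ≤ outdeg D.E' (D.φ a) := by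
  have hch : ∀ b : {b // T.E a b}, ∃ w, D.E' (D.φ a) w ∧ D.Reach w b.1 :=
    fun b => (D.F_iff_reach a b.1).1 b.2
  choose f hf1 hf2 using hch
  refine Nat.card_le_card_of_injective (fun b => ⟨f b, hf1 b⟩) ?_
  intro b₁ b₂ h
  have : f b₁ = f b₂ := Subtype.ext_iff.1 h
  exact Subtype.ext (D.reach_unique (this ▸ hf2 b₁) (hf2 b₂))

lemma Emb.indeg_le_one (hN : N.valid) (h1 : reticCount N.E = 1) (hT : IsTree T) (b : T.V) :
    indeg D.E' (D.φ b) ≤ 1 := by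
  by_contra hcon
  push_neg at hcon
  obtain ⟨u₁, u₂, hne, hu₁, hu₂⟩ := two_of_card (p := fun u => D.E' u (D.φ b)) hcon
  have hNdeg : 2 ≤ indeg N.E (D.φ b) :=
    two_le_card hne (D.sub _ _ hu₁) (D.sub _ _ hu₂)
  rcases hN.node_types (D.φ b) with h | h | h | h
  · rw [h.1] at hNdeg; omega
  · rw [h.1] at hNdeg; omega
  · rw [h.1] at hNdeg; omega
  · -- φ b is a reticulation
    have houtT : outdeg T.E b ≤ 1 :=
      le_trans (D.outdeg_le b) (le_trans (D.outdeg_le_N (D.φ b)) (le_of_eq h.2))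
    obtain ⟨a, ha⟩ := D.coreach_ex hN u₁
    have hTab : T.E a b := (D.F_iff_coreach a b).2 ⟨u₁, hu₁, ha⟩
    rcases hT.1.node_types b with hb | hb | hb | hb
    · exact absurd hTab (card_zero_iff.1 hb.1 a)
    · obtain ⟨x, hx⟩ := (hT.1.leaf_iff b).1 hb
      have hleafN : IsLeafNode N.E (N.lab x) := (hN.leaf_iff _).2 ⟨x, rfl⟩
      have : D.φ b = N.lab x := by rw [← hx, D.flab]
      rw [this, hleafN.1] at hNdeg; omega
    · rw [hb.2] at houtT; omega
    · exact absurd hb (card_zero_iff.1 hT.2 b)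

lemma Emb.det_bwd_im (hN : N.valid) (h1 : reticCount N.E = 1) (hT : IsTree T) (b : T.V) :
    ∀ w w', D.E' w (D.φ b) → D.E' w' (D.φ b) → w = w' :=
  eq_of_card_le_one (D.indeg_le_one hN h1 hT b)

lemma Emb.reach_chain {a : T.V} {w : N.V} {b : T.V} (hw : D.E' (D.φ a) w)
    (hr : D.Reach w b) : ∃ l, List.Chain D.E' (D.φ a) (l ++ [D.φ b]) ∧
      (∀ x ∈ l, x ∉ Set.range D.φ) ∧ (l ++ [D.φ b]).head? = some w := by
  rcases hr with hr | ⟨hwim, l, hc, hm⟩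
  · exact ⟨[], by simpa using List.Chain.cons (hr ▸ hw) List.Chain.nil, by simp, by simp [hr]⟩
  · refine ⟨w :: l, by simpa using List.Chain.cons hw hc, fun x hx => ?_, by simp⟩
    rcases List.mem_cons.1 hx with h | h
    · exact h ▸ hwim
    · exact hm x h

lemma Emb.first_unique (hN : N.valid) (h1 : reticCount N.E = 1) (hT : IsTree T)
    {a b : T.V} {w₁ w₂ : N.V} (h₁ : D.E' (D.φ a) w₁) (h₂ : D.E' (D.φ a) w₂)
    (r₁ : D.Reach w₁ b) (r₂ : D.Reach w₂ b) : w₁ = w₂ := by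
  obtain ⟨l₁, c₁, m₁, hd₁⟩ := D.reach_chain h₁ r₁
  obtain ⟨l₂, c₂, m₂, hd₂⟩ := D.reach_chain h₂ r₂
  have f₁ : List.Chain (flip D.E') (D.φ b) (l₁.reverse ++ [D.φ a]) := chain_flip.1 c₁
  have f₂ : List.Chain (flip D.E') (D.φ b) (l₂.reverse ++ [D.φ a]) := chain_flip.1 c₂
  have := chain_unique (Im := (· ∈ Set.range D.φ))
    (fun x hx => D.det_bwd hx) l₁.reverse l₂.reverse (D.φ b) _ _
    (D.det_bwd_im hN h1 hT b) ⟨a, rfl⟩ ⟨a, rfl⟩ f₁ f₂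
    (fun x hx => m₁ x (by simpa using hx)) (fun x hx => m₂ x (by simpa using hx))
  have hl : l₁ = l₂ := by
    have := this.1
    rwa [List.reverse_inj] at this
  rw [hl, hd₂] at hd₁
  exact (Option.some.inj hd₁).symm

lemma Emb.outdeg_eq (hN : N.valid) (h1 : reticCount N.E = 1) (hT : IsTree T) (a : T.V) :
    outdeg D.E' (D.φ a) = outdeg T.E a := by
  refine le_antisymm ?_ (D.outdeg_le a)
  have hch : ∀ w : {w // D.E' (D.φ a) w}, ∃ b, D.Reach w.1 b := fun w => D.reach_ex hN w.1
  choose f hf using hch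
  refine Nat.card_le_card_of_injective
    (fun w => ⟨f w, (D.F_iff_reach a (f w)).2 ⟨w.1, w.2, hf w⟩⟩) ?_
  intro w₁ w₂ h
  have hb : f w₁ = f w₂ := Subtype.ext_iff.1 h
  exact Subtype.ext (D.first_unique hN h1 hT w₁.2 w₂.2 (hf w₁) (hb ▸ hf w₂))

lemma Emb.indeg_eq (hN : N.valid) (h1 : reticCount N.E = 1) (hT : IsTree T) (b : T.V) :
    indeg D.E' (D.φ b) = indeg T.E b := by
  have hle := D.indeg_le_one hN h1 hT b
  have hTle : indeg T.E b ≤ 1 := by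
    rcases hT.1.node_types b with hb | hb | hb | hb
    · rw [hb.1]; omega
    · rw [hb.1]
    · rw [hb.1]
    · exact absurd hb (card_zero_iff.1 hT.2 b)
  by_cases hex : ∃ w, D.E' w (D.φ b)
  · obtain ⟨w, hw⟩ := hex
    obtain ⟨a, ha⟩ := D.coreach_ex hN w
    have hTab : T.E a b := (D.F_iff_coreach a b).2 ⟨w, hw, ha⟩
    have h1' : 1 ≤ indeg D.E' (D.φ b) := one_le_card hw
    have h2' : 1 ≤ indeg T.E b := one_le_card hTab
    omega
  · push_neg at hex
    have hz : indeg D.E' (D.φ b) = 0 := card_zero_iff.2 hex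
    have hz' : indeg T.E b = 0 := by
      refine card_zero_iff.2 (fun a ha => ?_)
      obtain ⟨w, hw, _⟩ := (D.F_iff_coreach a b).1 ha
      exact hex w hw
    rw [hz, hz']

lemma Emb.root_im (hN : N.valid) (h1 : reticCount N.E = 1) (hT : IsTree T)
    {a : T.V} (ha : IsRoot T.E a) : IsRoot N.E (D.φ a) := by
  obtain ⟨ρ, hρ, hρu⟩ := hN.root_unique
  have hρim : ρ ∈ Set.range D.φ := by
    by_contra hρim
    have h1' := (D.nonim ρ hρim).1
    have h2' := D.indeg_le_N ρ
    rw [hρ.1] at h2'; omega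
  obtain ⟨a', ha'⟩ := hρim
  have hdeg : indeg T.E a' = 0 := by
    have := D.indeg_eq hN h1 hT a'
    have h2' := D.indeg_le_N (D.φ a')
    rw [ha', hρ.1] at *; omega
  have hroot' : IsRoot T.E a' := by
    rcases hT.1.node_types a' with h | h | h | h
    · exact h
    · rw [h.1] at hdeg; omega
    · rw [h.1] at hdeg; omega
    · exact absurd h (card_zero_iff.1 hT.2 a')
  obtain ⟨rt, _, hrtu⟩ := hT.1.root_unique
  have : a = a' := (hrtu a ha).trans (hrtu a' hroot').symm
  rw [this, ha']
  exact hρ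

end Degrees
section Char
variable {X : Type} {N T : Net X} (D : Emb N T)

lemma Emb.char (hN : N.valid) (h1 : reticCount N.E = 1) (hT : IsTree T) :
    ∃ ret p, IsRetic N.E ret ∧ N.E p ret ∧
      (∀ a b, D.E' a b ↔ (N.E a b ∧ (a, b) ≠ (p, ret))) := by
  obtain ⟨ret, hret, hretu⟩ := unique_of_card_one h1
  have key : ∀ v, v ≠ ret → indeg D.E' v = indeg N.E v := by
    intro v hv
    by_cases hvim : v ∈ Set.range D.φ
    · obtain ⟨a, ha⟩ := hvim
      subst ha
      rw [D.indeg_eq hN h1 hT a]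
      have hround : ∀ (h : indeg T.E a = 1), indeg T.E a = indeg N.E (D.φ a) := by
        intro h
        rcases hN.node_types (D.φ a) with g | g | g | g
        · exfalso
          have h2 := D.indeg_le_N (D.φ a)
          rw [D.indeg_eq hN h1 hT a, h, g.1] at h2; omega
        · rw [h, g.1]
        · rw [h, g.1]
        · exact absurd (hretu _ g) hv
      rcases hT.1.node_types a with h | h | h | h
      · have := D.root_im hN h1 hT h
        rw [h.1, this.1]
      · exact hround h.1
      · exact hround h.1
      · exact absurd h (card_zero_iff.1 hT.2 a)
    · rw [(D.nonim v hvim).1]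
      rcases hN.node_types v with g | g | g | g
      · exfalso
        have h2 := D.indeg_le_N v
        rw [(D.nonim v hvim).1, g.1] at h2; omega
      · rw [g.1]
      · rw [g.1]
      · exact absurd (hretu _ g) hv
  have hr1 : indeg D.E' ret = 1 := by
    by_cases him : ret ∈ Set.range D.φ
    · obtain ⟨a, ha⟩ := him
      subst ha
      rw [D.indeg_eq hN h1 hT a]
      rcases hT.1.node_types a with h | h | h | h
      · exfalso
        have h2 := hret.1
        have h3 := (D.root_im hN h1 hT h).1
        omega
      · exact h.1
      · exact h.1
      · exact absurd h (card_zero_iff.1 hT.2 a)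
    · exact (D.nonim ret him).1
  have hsub : ∀ v, v ≠ ret → ∀ u, N.E u v → D.E' u v := fun v hv =>
    rel_eq_of_card (fun u h => D.sub u v h) (le_of_eq (key v hv).symm)
  obtain ⟨q₁, q₂, hq, hq₁, hq₂, _⟩ := two_elems (p := fun u => N.E u ret) hret.1
  have hqall : ∀ c, N.E c ret → c = q₁ ∨ c = q₂ := pair_of_card_two hret.1 hq₁ hq₂ hq
  obtain ⟨u, hu, huu⟩ := unique_of_card_one hr1
  have main : ∀ x y : N.V, x ≠ y → N.E y ret → u = x →
      (∀ c, N.E c ret → c = x ∨ c = y) →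
      ∀ a b, D.E' a b ↔ (N.E a b ∧ (a, b) ≠ (y, ret)) := by
    intro x y hxy hy hux hall a b
    constructor
    · intro hab
      refine ⟨D.sub _ _ hab, fun heq => ?_⟩
      rw [Prod.mk.injEq] at heq
      obtain ⟨rfl, rfl⟩ := heq
      exact hxy ((hux ▸ huu a hab).symm)
    · rintro ⟨hab, hne⟩
      by_cases hb : b = ret
      · subst hb
        have hay : a ≠ y := fun h => hne (by rw [h])
        have hax : a = x := (hall a hab).resolve_right hay
        rw [hax, ← hux]
        exact hu
      · exact hsub b hb a hab
  rcases (hqall u (D.sub u ret hu) : u = q₁ ∨ u = q₂) with h | h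
  · exact ⟨ret, q₂, hret, hq₂, main q₁ q₂ hq hq₂ h hqall⟩
  · exact ⟨ret, q₁, hret, hq₁,
      main q₂ q₁ (Ne.symm hq) hq₁ h (fun c hc => (hqall c hc).symm)⟩

lemma Emb.range_char (hN : N.valid) (h1 : reticCount N.E = 1) (hT : IsTree T) :
    Set.range D.φ = {v | ¬ (indeg D.E' v = 1 ∧ outdeg D.E' v = 1)} := by
  ext v
  simp only [Set.mem_setOf_eq]
  constructor
  · rintro ⟨a, rfl⟩ ⟨hin, hout⟩
    rw [D.indeg_eq hN h1 hT a] at hin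
    rw [D.outdeg_eq hN h1 hT a] at hout
    rcases hT.1.node_types a with h | h | h | h
    · rw [h.1] at hin; omega
    · rw [h.2] at hout; omega
    · rw [h.2] at hout; omega
    · exact absurd h (card_zero_iff.1 hT.2 a)
  · intro h
    by_contra him
    exact h (D.nonim v him)

lemma iso_of_same {X : Type} {N T T' : Net X} (hN : N.valid) (h1 : reticCount N.E = 1)
    (hT : IsTree T) (hT' : IsTree T') (D : Emb N T) (D' : Emb N T')
    (hEE : ∀ a b, D.E' a b ↔ D'.E' a b) : NetIso T T' := by
  have hdegi : ∀ v, indeg D.E' v = indeg D'.E' v := fun v =>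
    Nat.card_congr (Equiv.subtypeEquivRight (fun u => hEE u v))
  have hdego : ∀ v, outdeg D.E' v = outdeg D'.E' v := fun v =>
    Nat.card_congr (Equiv.subtypeEquivRight (fun u => hEE v u))
  have hrange : Set.range D.φ = Set.range D'.φ := by
    rw [D.range_char hN h1 hT, D'.range_char hN h1 hT']
    refine Set.ext (fun v => ?_)
    simp only [Set.mem_setOf_eq]
    rw [hdegi v, hdego v]
  have hmem : ∀ a : T.V, ∃ b, D'.φ b = D.φ a := fun a => by
    have : D.φ a ∈ Set.range D'.φ := by rw [← hrange]; exact Set.mem_range_self a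
    exact this
  choose f hf using hmem
  have hmem' : ∀ b : T'.V, ∃ a, D.φ a = D'.φ b := fun b => by
    have : D'.φ b ∈ Set.range D.φ := by rw [hrange]; exact Set.mem_range_self b
    exact this
  choose g hg using hmem'
  have hgf : ∀ a, g (f a) = a := fun a => D.div.1 (by rw [hg, hf])
  have hfg : ∀ b, f (g b) = b := fun b => D'.div.1 (by rw [hf, hg])
  refine ⟨⟨f, g, hgf, hfg⟩, fun a b => ?_, fun x => ?_⟩
  · show T.E a b ↔ T'.E (f a) (f b)
    rw [D.div.2.2 a b, D'.div.2.2 (f a) (f b), hf, hf]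
    constructor
    · rintro ⟨l, hc, hm⟩
      exact ⟨l, List.IsChain.imp (fun ⦃a b⦄ h => (hEE a b).1 h) hc,
        fun x hx => by rw [← hrange]; exact hm x hx⟩
    · rintro ⟨l, hc, hm⟩
      exact ⟨l, List.IsChain.imp (fun ⦃a b⦄ h => (hEE a b).2 h) hc,
        fun x hx => by rw [hrange]; exact hm x hx⟩
  · show f (T.lab x) = T'.lab x
    exact D'.div.1 (by rw [hf, D.flab, D'.flab])

end Char
section Triangle
variable {X : Type}

lemma triangle_tree (N : Net X) (hN : N.valid) (h1 : reticCount N.E = 1)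
    {t s r : N.V} (hts : N.E t s) (htr : N.E t r) (hsr : N.E s r) :
    IsRetic N.E r ∧ (∀ c, N.E c r → c = t ∨ c = s) ∧
    ∃ T : Net X, IsTree T ∧
      (∃ D : Emb N T, ∀ a b, D.E' a b ↔ (N.E a b ∧ (a, b) ≠ (t, r))) ∧
      (∃ D : Emb N T, ∀ a b, D.E' a b ↔ (N.E a b ∧ (a, b) ≠ (s, r))) := by
  classical
  have acyc := hN.acyclic
  have notE : ∀ a, ¬ N.E a a := fun a h => acyc a (.single h)
  have noswap : ∀ a b, N.E a b → N.E b a → False := fun a b h h' =>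
    acyc a ((Relation.TransGen.single h).tail h')
  have hts' : t ≠ s := fun h => notE s (h ▸ hts)
  have htr' : t ≠ r := fun h => notE r (h ▸ htr)
  have hsr' : s ≠ r := fun h => notE r (h ▸ hsr)
  have hretr : IsRetic N.E r := by
    have h2 : 2 ≤ indeg N.E r := two_le_card hts' htr hsr
    rcases hN.node_types r with h | h | h | h
    · have := h.1; omega
    · have := h.1; omega
    · have := h.1; omega
    · exact h
  have hretu : ∀ y, IsRetic N.E y → y = r := by
    obtain ⟨r0, hr0, hr0u⟩ := unique_of_card_one h1
    intro y hy
    exact (hr0u y hy).trans (hr0u r hretr).symm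
  have retic_of_two : ∀ v a b, a ≠ b → N.E a v → N.E b v → v = r := by
    intro v a b hab ha hb
    have h2 : 2 ≤ indeg N.E v := two_le_card hab ha hb
    rcases hN.node_types v with h | h | h | h
    · have := h.1; omega
    · have := h.1; omega
    · have := h.1; omega
    · exact hretu v h
  have hsplitt : IsSplit N.E t := by
    have h2 : 2 ≤ outdeg N.E t := two_le_card hsr' hts htr
    rcases hN.node_types t with h | h | h | h
    · have := h.2; omega
    · have := h.2; omega
    · exact h
    · have := h.2; omega
  have hsplits : IsSplit N.E s := by
    have hin : 1 ≤ indeg N.E s := one_le_card hts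
    have hout : 1 ≤ outdeg N.E s := one_le_card hsr
    rcases hN.node_types s with h | h | h | h
    · have := h.1; omega
    · have := h.2; omega
    · exact h
    · exact absurd (hretu s h) hsr'
  have hrpar : ∀ c, N.E c r → c = t ∨ c = s :=
    pair_of_card_two hretr.1 htr hsr hts'
  have htchild : ∀ c, N.E t c → c = s ∨ c = r :=
    pair_of_card_two hsplitt.2 hts htr hsr'
  obtain ⟨p_t, hpt, hptu⟩ := unique_of_card_one hsplitt.1
  have hptu' : ∀ y, N.E y t → y = p_t := fun y hy => hptu y hy
  have hstpar : ∀ c, N.E c s → c = t := by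
    obtain ⟨u0, hu0, hu0u⟩ := unique_of_card_one hsplits.1
    intro c hc
    exact (hu0u c hc).trans (hu0u t hts).symm
  obtain ⟨c_r, hcr, hcru⟩ := unique_of_card_one hretr.2
  have hcru' : ∀ y, N.E r y → y = c_r := fun y hy => hcru y hy
  obtain ⟨c_s, hsc, hcsr, hschild⟩ := pick_other hsr hsplits.2
  have hpt_t : p_t ≠ t := fun h => notE t (h ▸ hpt)
  have hpt_s : p_t ≠ s := fun h => noswap t s hts (h ▸ hpt)
  have hpt_r : p_t ≠ r := fun h => noswap t r htr (h ▸ hpt)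
  have hcr_r : c_r ≠ r := fun h => notE r (h ▸ hcr)
  have hcr_t : c_r ≠ t := fun h => noswap t r htr (h ▸ hcr)
  have hcr_s : c_r ≠ s := fun h => noswap s r hsr (h ▸ hcr)
  have hcs_t : c_s ≠ t := fun h => noswap t s hts (h ▸ hsc)
  have hcs_s : c_s ≠ s := fun h => notE s (h ▸ hsc)
  have hcs_cr : c_s ≠ c_r := fun h =>
    hcr_r (retic_of_two c_r s r hsr' (h ▸ hsc) hcr)
  have hpt_cr : p_t ≠ c_r := fun h =>
    acyc p_t (((Relation.TransGen.single hpt).tail htr).tail (h ▸ hcr))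
  have hns : ¬ N.E p_t s := fun h => hpt_t (hstpar p_t h)
  have hcrpar : ∀ u, N.E u c_r → u = r := by
    rcases hN.node_types c_r with h | h | h | h
    · exfalso; have h2 : 1 ≤ indeg N.E c_r := one_le_card hcr; have := h.1; omega
    · obtain ⟨u0, _, huu⟩ := unique_of_card_one h.1
      exact fun u hu => (huu u hu).trans (huu r hcr).symm
    · obtain ⟨u0, _, huu⟩ := unique_of_card_one h.1
      exact fun u hu => (huu u hu).trans (huu r hcr).symm
    · exact absurd (hretu c_r h) hcr_r
  obtain ⟨ρ, hρ, hρu⟩ := hN.root_unique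
  have hρ_t : ρ ≠ t := by
    intro h
    have h2 := hρ.1
    have h3 := hsplitt.1
    rw [h] at h2; omega
  have hρ_r : ρ ≠ r := by
    intro h
    have h2 := hρ.1
    have h3 := hretr.1
    rw [h] at h2; omega
  -- the tree
  set Et : {v : N.V // v ≠ t ∧ v ≠ r} → {v : N.V // v ≠ t ∧ v ≠ r} → Prop :=
    fun a b => N.E a.1 b.1 ∨ (a.1 = p_t ∧ b.1 = s) ∨ (a.1 = s ∧ b.1 = c_r) with hEt
  have hlabne : ∀ x, N.lab x ≠ t ∧ N.lab x ≠ r := by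
    intro x
    have hl : IsLeafNode N.E (N.lab x) := (hN.leaf_iff _).2 ⟨x, rfl⟩
    constructor
    · intro h
      have h2 := hl.2
      have h3 := hsplitt.2
      rw [h] at h2; omega
    · intro h
      have h2 := hl.2
      have h3 := hretr.2
      rw [h] at h2; omega
  have hdegout : ∀ v : {v : N.V // v ≠ t ∧ v ≠ r}, outdeg Et v = outdeg N.E v.1 := by
    intro v
    by_cases hv1 : v.1 = p_t
    · rcases hN.node_types p_t with h | h | h | h
      · -- root: single child t, new single child s
        obtain ⟨u0, _, huu⟩ := unique_of_card_one h.2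
        have hall : ∀ c, N.E p_t c → c = t := fun c hc => (huu c hc).trans (huu t hpt).symm
        have hone : outdeg Et v = 1 := by
          refine card_one_of_unique ⟨⟨s, Ne.symm hts', hsr'⟩, Or.inr (Or.inl ⟨hv1, rfl⟩), ?_⟩
          rintro w (hw | hw | hw)
          · exact absurd (hall w.1 (hv1 ▸ hw)) w.2.1
          · exact Subtype.ext hw.2
          · exact absurd (hv1 ▸ hw.1 : p_t = s).symm (Ne.symm hpt_s)
        rw [hone, hv1, h.2]
      · exfalso
        have h2 : 1 ≤ outdeg N.E p_t := one_le_card hpt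
        have := h.2; omega
      · -- split: children t,d ↦ d,s
        obtain ⟨d, hd, hdt, hdall⟩ := pick_other hpt h.2
        have hd_s : d ≠ s := fun hh => hns (hh ▸ hd)
        have hd_r : d ≠ r := by
          intro hh
          rcases hrpar p_t (hh ▸ hd) with g | g
          · exact hpt_t g
          · exact hpt_s g
        have htwo : outdeg Et v = 2 := by
          refine card_eq_two_of (x := ⟨d, hdt, hd_r⟩) (y := ⟨s, Ne.symm hts', hsr'⟩)
            (fun hh => hd_s (Subtype.ext_iff.1 hh)) (Or.inl (by rw [hv1]; exact hd))
            (Or.inr (Or.inl ⟨hv1, rfl⟩)) ?_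
          rintro w (hw | hw | hw)
          · rcases hdall w.1 (hv1 ▸ hw) with g | g
            · exact absurd g w.2.1
            · exact Or.inl (Subtype.ext g)
          · exact Or.inr (Subtype.ext hw.2)
          · exact absurd (hv1 ▸ hw.1 : p_t = s).symm (Ne.symm hpt_s)
        rw [htwo, hv1, h.2]
      · -- retic: single child
        obtain ⟨u0, _, huu⟩ := unique_of_card_one h.2
        have hall : ∀ c, N.E p_t c → c = t := fun c hc => (huu c hc).trans (huu t hpt).symm
        have hone : outdeg Et v = 1 := by
          refine card_one_of_unique ⟨⟨s, Ne.symm hts', hsr'⟩, Or.inr (Or.inl ⟨hv1, rfl⟩), ?_⟩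
          rintro w (hw | hw | hw)
          · exact absurd (hall w.1 (hv1 ▸ hw)) w.2.1
          · exact Subtype.ext hw.2
          · exact absurd (hv1 ▸ hw.1 : p_t = s).symm (Ne.symm hpt_s)
        rw [hone, hv1, h.2]
    · by_cases hv2 : v.1 = s
      · have htwo : outdeg Et v = 2 := by
          refine card_eq_two_of (x := ⟨c_s, hcs_t, hcsr⟩) (y := ⟨c_r, hcr_t, hcr_r⟩)
            (fun hh => hcs_cr (Subtype.ext_iff.1 hh)) (Or.inl (by rw [hv2]; exact hsc))
            (Or.inr (Or.inr ⟨hv2, rfl⟩)) ?_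
          rintro w (hw | hw | hw)
          · rcases hschild w.1 (hv2 ▸ hw) with g | g
            · exact absurd g w.2.2
            · exact Or.inl (Subtype.ext g)
          · exact absurd (hv2 ▸ hw.1 : s = p_t) hpt_s.symm
          · exact Or.inr (Subtype.ext hw.2)
        rw [htwo, hv2, hsplits.2]
      · refine card_val_eq (fun w => ⟨?_, fun h => Or.inl h⟩) (fun w hw => ⟨?_, ?_⟩)
        · rintro (hw | hw | hw)
          · exact hw
          · exact absurd hw.1 hv1
          · exact absurd hw.1 hv2
        · intro hh
          exact hv1 (hptu' v.1 (hh ▸ hw))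
        · intro hh
          rcases hrpar v.1 (hh ▸ hw) with g | g
          · exact v.2.1 g
          · exact hv2 g
  have hdegin : ∀ v : {v : N.V // v ≠ t ∧ v ≠ r}, indeg Et v = indeg N.E v.1 := by
    intro v
    by_cases hv2 : v.1 = s
    · have hone : indeg Et v = 1 := by
        refine card_one_of_unique ⟨⟨p_t, hpt_t, hpt_r⟩, Or.inr (Or.inl ⟨rfl, hv2⟩), ?_⟩
        rintro u (hu | hu | hu)
        · exact absurd (hstpar u.1 (hv2 ▸ hu)) u.2.1
        · exact Subtype.ext hu.1
        · exact absurd (hv2 ▸ hu.2 : s = c_r).symm hcr_s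
      rw [hone, hv2, hsplits.1]
    · by_cases hv3 : v.1 = c_r
      · have hone : indeg Et v = 1 := by
          refine card_one_of_unique ⟨⟨s, Ne.symm hts', hsr'⟩, Or.inr (Or.inr ⟨rfl, hv3⟩), ?_⟩
          rintro u (hu | hu | hu)
          · exact absurd (hcrpar u.1 (hv3 ▸ hu)) u.2.2
          · exact absurd (hv3 ▸ hu.2 : c_r = s) hcr_s
          · exact Subtype.ext hu.1
        have hcrdeg : indeg N.E c_r = 1 := by
          rcases hN.node_types c_r with h | h | h | h
          · exfalso; have h2 : 1 ≤ indeg N.E c_r := one_le_card hcr; have := h.1; omega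
          · exact h.1
          · exact h.1
          · exact absurd (hretu c_r h) hcr_r
        rw [hone, hv3, hcrdeg]
      · refine card_val_eq (fun u => ⟨?_, fun h => Or.inl h⟩) (fun u hu => ⟨?_, ?_⟩)
        · rintro (hu | hu | hu)
          · exact hu
          · exact absurd hu.2 hv2
          · exact absurd hu.2 hv3
        · intro hh
          rcases htchild v.1 (hh ▸ hu) with g | g
          · exact hv2 g
          · exact v.2.2 g
        · intro hh
          exact hv3 (hcru' v.1 (hh ▸ hu))
  have hstep : ∀ a b : {v : N.V // v ≠ t ∧ v ≠ r}, Et a b → Relation.TransGen N.E a.1 b.1 := by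
    rintro a b (h | ⟨h1', h2'⟩ | ⟨h1', h2'⟩)
    · exact .single h
    · rw [h1', h2']; exact (Relation.TransGen.single hpt).tail hts
    · rw [h1', h2']; exact (Relation.TransGen.single hsr).tail hcr
  have hiffs : ∀ v : {v : N.V // v ≠ t ∧ v ≠ r},
      (IsRoot Et v ↔ IsRoot N.E v.1) ∧ (IsLeafNode Et v ↔ IsLeafNode N.E v.1) ∧
      (IsSplit Et v ↔ IsSplit N.E v.1) ∧ (IsRetic Et v ↔ IsRetic N.E v.1) := by
    intro v
    unfold IsRoot IsLeafNode IsSplit IsRetic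
    rw [hdegin v, hdegout v]
    exact ⟨Iff.rfl, Iff.rfl, Iff.rfl, Iff.rfl⟩
  refine ⟨hretr, hrpar,
    ⟨{ V := {v : N.V // v ≠ t ∧ v ≠ r}, fin := Subtype.fintype _, E := Et,
       lab := fun x => ⟨N.lab x, hlabne x⟩ }, ⟨?_, ?_⟩, ?_, ?_⟩⟩
  · -- IsPhyloNet
    refine ⟨?_, ?_, ?_, ?_, ?_⟩
    · intro v hv
      exact acyc v.1 (transGen_lift Subtype.val hstep hv)
    · refine ⟨⟨ρ, hρ_t, hρ_r⟩, (hiffs _).1.2 hρ, fun y hy => Subtype.ext (hρu y.1 ((hiffs y).1.1 hy))⟩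
    · intro x y h
      simp only [Subtype.mk.injEq] at h
      exact hN.lab_inj h
    · intro v
      rw [(hiffs v).2.1, hN.leaf_iff]
      constructor
      · rintro ⟨x, hx⟩
        exact ⟨x, Subtype.ext hx⟩
      · rintro ⟨x, hx⟩
        exact ⟨x, Subtype.ext_iff.1 hx⟩
    · intro v
      rcases hN.node_types v.1 with h | h | h | h
      · exact Or.inl ((hiffs v).1.2 h)
      · exact Or.inr (Or.inl ((hiffs v).2.1.2 h))
      · exact Or.inr (Or.inr (Or.inl ((hiffs v).2.2.1.2 h)))
      · exact absurd (hretu v.1 h) v.2.2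
  · -- no retics
    exact card_zero_iff.2 (fun v hv => v.2.2 (hretu v.1 ((hiffs v).2.2.2.1 hv)))
  · -- embedding 1 : delete (t, r)
    refine ⟨⟨fun a b => N.E a b ∧ (a, b) ≠ (t, r), Subtype.val, fun a b h => h.1,
      ⟨Subtype.val_injective, ?_, ?_⟩, fun x => rfl⟩, fun a b => Iff.rfl⟩
    · intro v hv
      have hv' : v = t ∨ v = r := by
        by_contra h'
        push_neg at h'
        exact hv ⟨⟨v, h'.1, h'.2⟩, rfl⟩
      rcases hv' with rfl | rfl
      · constructor
        · refine card_one_of_unique ⟨p_t, ⟨hpt, fun h => htr' (congrArg Prod.snd h)⟩, ?_⟩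
          rintro y ⟨hy, _⟩
          exact hptu' y hy
        · refine card_one_of_unique ⟨s, ⟨hts, fun h => hsr' (congrArg Prod.snd h)⟩, ?_⟩
          rintro y ⟨hy, hy2⟩
          rcases htchild y hy with g | g
          · exact g
          · exact absurd (by rw [g]) hy2
      · constructor
        · refine card_one_of_unique ⟨s, ⟨hsr, fun h => hts' (congrArg Prod.fst h).symm⟩, ?_⟩
          rintro y ⟨hy, hy2⟩
          rcases hrpar y hy with g | g
          · exact absurd (by rw [g]) hy2
          · exact g
        · refine card_one_of_unique ⟨c_r, ⟨hcr, fun h => htr' (congrArg Prod.fst h).symm⟩, ?_⟩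
          rintro y ⟨hy, _⟩
          exact hcru' y hy
    · intro a b
      constructor
      · rintro (h | ⟨h1', h2'⟩ | ⟨h1', h2'⟩)
        · refine ⟨[], ?_, by simp⟩
          simp only [List.nil_append]
          exact List.Chain.cons ⟨h, fun hh => a.2.1 (congrArg Prod.fst hh)⟩ List.Chain.nil
        · refine ⟨[t], ?_, ?_⟩
          · simp only [List.cons_append, List.nil_append]
            rw [h1', h2']
            exact List.Chain.cons ⟨hpt, fun hh => hpt_t (congrArg Prod.fst hh)⟩
              (List.Chain.cons ⟨hts, fun hh => hsr' (congrArg Prod.snd hh)⟩ List.Chain.nil)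
          · intro x hx hmem
            obtain ⟨u, hu⟩ := hmem
            exact u.2.1 (hu.trans (List.mem_singleton.1 hx))
        · refine ⟨[r], ?_, ?_⟩
          · simp only [List.cons_append, List.nil_append]
            rw [h1', h2']
            exact List.Chain.cons ⟨hsr, fun hh => hts' (congrArg Prod.fst hh).symm⟩
              (List.Chain.cons ⟨hcr, fun hh => htr' (congrArg Prod.fst hh).symm⟩ List.Chain.nil)
          · intro x hx hmem
            obtain ⟨u, hu⟩ := hmem
            exact u.2.2 (hu.trans (List.mem_singleton.1 hx))
      · rintro ⟨l, hc, hm⟩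
        have hmem : ∀ x ∈ l, x = t ∨ x = r := by
          intro x hx
          by_contra h'
          push_neg at h'
          exact hm x hx ⟨⟨x, h'.1, h'.2⟩, rfl⟩
        rcases l with _ | ⟨x, _ | ⟨y, l'⟩⟩
        · simp only [List.nil_append] at hc
          simp only [List.Chain, List.isChain_cons_cons] at hc
          exact Or.inl hc.1.1
        · simp only [List.cons_append, List.nil_append] at hc
          simp only [List.Chain, List.isChain_cons_cons] at hc
          rcases hmem x (by simp) with h | h <;> rw [h] at hc
          · have ha : a.1 = p_t := hptu' a.1 hc.1.1
            have hb : b.1 = s := by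
              rcases htchild b.1 hc.2.1.1 with g | g
              · exact g
              · exact absurd (by rw [g]) hc.2.1.2
            exact Or.inr (Or.inl ⟨ha, hb⟩)
          · have ha : a.1 = s := by
              rcases hrpar a.1 hc.1.1 with g | g
              · exact absurd (by rw [g]) hc.1.2
              · exact g
            have hb : b.1 = c_r := hcru' b.1 hc.2.1.1
            exact Or.inr (Or.inr ⟨ha, hb⟩)
        · exfalso
          simp only [List.cons_append] at hc
          simp only [List.Chain, List.isChain_cons_cons] at hc
          have h2 := hc.2.1
          rcases hmem x (by simp) with h | h <;> rcases hmem y (by simp) with h' | h' <;>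
            rw [h, h'] at h2
          · exact notE t h2.1
          · exact h2.2 rfl
          · exact noswap t r htr h2.1
          · exact notE r h2.1
  · -- embedding 2 : delete (s, r)
    set φ2 : {v : N.V // v ≠ t ∧ v ≠ r} → N.V := fun v => if v.1 = s then t else v.1 with hφ2
    have hφs : ∀ v : {v : N.V // v ≠ t ∧ v ≠ r}, v.1 = s → φ2 v = t := by
      intro v h; simp [hφ2, h]
    have hφn : ∀ v : {v : N.V // v ≠ t ∧ v ≠ r}, v.1 ≠ s → φ2 v = v.1 := by
      intro v h; simp [hφ2, h]
    have hrange2 : ∀ w, w ∉ Set.range φ2 ↔ (w = s ∨ w = r) := by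
      intro w
      constructor
      · intro hw
        by_contra h'
        push_neg at h'
        by_cases hwt : w = t
        · exact hw ⟨⟨s, Ne.symm hts', hsr'⟩, by rw [hφs ⟨s, Ne.symm hts', hsr'⟩ rfl, hwt]⟩
        · exact hw ⟨⟨w, hwt, h'.2⟩, hφn _ h'.1⟩
      · rintro (hw | hw) ⟨u, hu⟩ <;> rw [hw] at hu
        · by_cases h : u.1 = s
          · rw [hφs u h] at hu; exact hts' hu
          · rw [hφn u h] at hu; exact h hu
        · by_cases h : u.1 = s
          · rw [hφs u h] at hu; exact htr' hu
          · rw [hφn u h] at hu; exact u.2.2 hu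
    refine ⟨⟨fun a b => N.E a b ∧ (a, b) ≠ (s, r), φ2, fun a b h => h.1,
      ⟨?_, ?_, ?_⟩, ?_⟩, fun a b => Iff.rfl⟩
    · intro u w h
      by_cases hu : u.1 = s <;> by_cases hw : w.1 = s
      · exact Subtype.ext (hu.trans hw.symm)
      · rw [hφs u hu, hφn w hw] at h; exact absurd h.symm w.2.1
      · rw [hφn u hu, hφs w hw] at h; exact absurd h u.2.1
      · rw [hφn u hu, hφn w hw] at h; exact Subtype.ext h
    · intro v hv
      rcases (hrange2 v).1 hv with rfl | rfl
      · constructor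
        · refine card_one_of_unique ⟨t, ⟨hts, fun h => hts' (congrArg Prod.fst h)⟩, ?_⟩
          rintro y ⟨hy, _⟩
          exact hstpar y hy
        · refine card_one_of_unique ⟨c_s, ⟨hsc, fun h => hcsr (congrArg Prod.snd h)⟩, ?_⟩
          rintro y ⟨hy, hy2⟩
          rcases hschild y hy with g | g
          · exact absurd (by rw [g]) hy2
          · exact g
      · constructor
        · refine card_one_of_unique ⟨t, ⟨htr, fun h => hts' (congrArg Prod.fst h)⟩, ?_⟩
          rintro y ⟨hy, hy2⟩
          rcases hrpar y hy with g | g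
          · exact g
          · exact absurd (by rw [g]) hy2
        · refine card_one_of_unique ⟨c_r, ⟨hcr, fun h => hsr' (congrArg Prod.fst h).symm⟩, ?_⟩
          rintro y ⟨hy, _⟩
          exact hcru' y hy
    · intro a b
      constructor
      · rintro (h | ⟨h1', h2'⟩ | ⟨h1', h2'⟩)
        · by_cases ha : a.1 = s
          · have hb : b.1 = c_s := by
              rcases hschild b.1 (by rw [← ha]; exact h) with g | g
              · exact absurd g b.2.2
              · exact g
            refine ⟨[s], ?_, ?_⟩
            · simp only [List.cons_append, List.nil_append]
              rw [hφs a ha, hφn b (by rw [hb]; exact hcs_s), hb]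
              exact List.Chain.cons ⟨hts, fun hh => hts' (congrArg Prod.fst hh)⟩
                (List.Chain.cons ⟨hsc, fun hh => hcsr (congrArg Prod.snd hh)⟩ List.Chain.nil)
            · intro x hx
              rw [List.mem_singleton] at hx
              rw [hx]
              exact (hrange2 s).2 (Or.inl rfl)
          · by_cases hb : b.1 = s
            · exact absurd (hstpar a.1 (by rw [← hb]; exact h)) a.2.1
            · refine ⟨[], ?_, by simp⟩
              simp only [List.nil_append]
              rw [hφn a ha, hφn b hb]
              exact List.Chain.cons ⟨h, fun hh => ha (congrArg Prod.fst hh)⟩ List.Chain.nil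
        · refine ⟨[], ?_, by simp⟩
          simp only [List.nil_append]
          rw [hφn a (by rw [h1']; exact hpt_s), hφs b h2', h1']
          exact List.Chain.cons ⟨hpt, fun hh => hpt_s (congrArg Prod.fst hh)⟩ List.Chain.nil
        · refine ⟨[r], ?_, ?_⟩
          · simp only [List.cons_append, List.nil_append]
            rw [hφs a h1', hφn b (by rw [h2']; exact hcr_s), h2']
            exact List.Chain.cons ⟨htr, fun hh => hts' (congrArg Prod.fst hh)⟩
              (List.Chain.cons ⟨hcr, fun hh => hsr' (congrArg Prod.fst hh).symm⟩ List.Chain.nil)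
          · intro x hx
            rw [List.mem_singleton] at hx
            rw [hx]
            exact (hrange2 r).2 (Or.inr rfl)
      · rintro ⟨l, hc, hm⟩
        have hmem : ∀ x ∈ l, x = s ∨ x = r := fun x hx => (hrange2 x).1 (hm x hx)
        have hφb_im : φ2 b ∈ Set.range φ2 := ⟨b, rfl⟩
        rcases l with _ | ⟨x, _ | ⟨y, l'⟩⟩
        · simp only [List.nil_append] at hc
          simp only [List.Chain, List.isChain_cons_cons] at hc
          have h := hc.1
          by_cases ha : a.1 = s
          · exfalso
            rw [hφs a ha] at h
            rcases htchild _ h.1 with g | g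
            · exact (hrange2 _).2 (Or.inl g) hφb_im
            · exact (hrange2 _).2 (Or.inr g) hφb_im
          · rw [hφn a ha] at h
            by_cases hb : b.1 = s
            · rw [hφs b hb] at h
              exact Or.inr (Or.inl ⟨hptu' a.1 h.1, hb⟩)
            · rw [hφn b hb] at h
              exact Or.inl h.1
        · simp only [List.cons_append, List.nil_append] at hc
          simp only [List.Chain, List.isChain_cons_cons] at hc
          obtain ⟨h1'', h2'', _⟩ := hc
          rcases hmem x (by simp) with h | h <;> rw [h] at h1'' h2''
          · have ha : a.1 = s := by
              by_contra ha
              rw [hφn a ha] at h1''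
              exact a.2.1 (hstpar a.1 h1''.1)
            have hb : b.1 = c_s := by
              have hbn : φ2 b = c_s := by
                rcases hschild (φ2 b) h2''.1 with g | g
                · exact absurd (by rw [g]) h2''.2
                · exact g
              by_cases hb' : b.1 = s
              · rw [hφs b hb'] at hbn; exact absurd hbn.symm hcs_t
              · rw [hφn b hb'] at hbn; exact hbn
            exact Or.inl (by rw [ha, hb]; exact hsc)
          · have ha : a.1 = s := by
              have hta : φ2 a = t := by
                rcases hrpar (φ2 a) h1''.1 with g | g
                · exact g
                · exact absurd (by rw [g]) h1''.2
              by_cases ha' : a.1 = s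
              · exact ha'
              · rw [hφn a ha'] at hta; exact absurd hta a.2.1
            have hb : b.1 = c_r := by
              have hbn : φ2 b = c_r := hcru' _ h2''.1
              by_cases hb' : b.1 = s
              · rw [hφs b hb'] at hbn; exact absurd hbn.symm hcr_t
              · rw [hφn b hb'] at hbn; exact hbn
            exact Or.inr (Or.inr ⟨ha, hb⟩)
        · exfalso
          simp only [List.cons_append] at hc
          simp only [List.Chain, List.isChain_cons_cons] at hc
          have h2'' := hc.2.1
          rcases hmem x (by simp) with h | h <;> rcases hmem y (by simp) with h' | h' <;>
            rw [h, h'] at h2''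
          · exact notE s h2''.1
          · exact h2''.2 rfl
          · exact noswap s r hsr h2''.1
          · exact notE r h2''.1
    · intro x
      have hlx : N.lab x ≠ s := by
        have hl : IsLeafNode N.E (N.lab x) := (hN.leaf_iff _).2 ⟨x, rfl⟩
        intro h
        have h2 := hl.2
        have h3 := hsplits.2
        rw [h] at h2; omega
      exact hφn ⟨N.lab x, hlabne x⟩ hlx

end Triangle
/-- a tier-1 network has at most two embedded trees (up to labelled
isomorphism), and exactly one if it contains a triangle. -/
theorem tier1_embedded_trees {X : Type} (N : Net X) (hN : N.valid)
    (h1 : reticCount N.E = 1) :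
    (∃ T₁ T₂ : Net X, ∀ T : Net X, EmbeddedTree T N → NetIso T T₁ ∨ NetIso T T₂) ∧
    (HasTriangle N.E →
      ∃ T : Net X, EmbeddedTree T N ∧ ∀ T' : Net X, EmbeddedTree T' N → NetIso T' T) := by
  classical
  obtain ⟨ret0, hret0, hretu0⟩ := unique_of_card_one h1
  obtain ⟨q₁, q₂, hq, hq₁, hq₂, _⟩ := two_elems (p := fun u => N.E u ret0) hret0.1
  have hqall := pair_of_card_two (p := fun u => N.E u ret0) hret0.1 hq₁ hq₂ hq
  set P : N.V → Net X → Prop := fun q T =>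
    IsTree T ∧ ∃ D : Emb N T, ∀ a b, D.E' a b ↔ (N.E a b ∧ (a, b) ≠ (q, ret0)) with hPdef
  have hcases : ∀ T : Net X, EmbeddedTree T N → P q₁ T ∨ P q₂ T := by
    rintro T ⟨hT, E', φ, hsubE, hdiv, hlab⟩
    set D : Emb N T := ⟨E', φ, hsubE, hdiv, hlab⟩ with hD
    obtain ⟨ret, p, hret, hp, hchar⟩ := D.char hN h1 hT
    have hh : ret = ret0 := hretu0 ret hret
    subst hh
    rcases hqall p hp with h | h
    · exact Or.inl ⟨hT, D, h ▸ hchar⟩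
    · exact Or.inr ⟨hT, D, h ▸ hchar⟩
  have hiso : ∀ q (T T' : Net X), P q T → P q T' → NetIso T T' := by
    rintro q T T' ⟨hT, D, hc⟩ ⟨hT', D', hc'⟩
    exact iso_of_same hN h1 hT hT' D D' (fun a b => (hc a b).trans ((hc' a b).symm))
  constructor
  · by_cases hx1 : ∃ T, P q₁ T
    · by_cases hx2 : ∃ T, P q₂ T
      · refine ⟨hx1.choose, hx2.choose, fun T hT => ?_⟩
        rcases hcases T hT with h | h
        · exact Or.inl (hiso _ _ _ h hx1.choose_spec)
        · exact Or.inr (hiso _ _ _ h hx2.choose_spec)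
      · refine ⟨hx1.choose, N, fun T hT => ?_⟩
        rcases hcases T hT with h | h
        · exact Or.inl (hiso _ _ _ h hx1.choose_spec)
        · exact absurd ⟨T, h⟩ hx2
    · by_cases hx2 : ∃ T, P q₂ T
      · refine ⟨N, hx2.choose, fun T hT => ?_⟩
        rcases hcases T hT with h | h
        · exact absurd ⟨T, h⟩ hx1
        · exact Or.inr (hiso _ _ _ h hx2.choose_spec)
      · refine ⟨N, N, fun T hT => ?_⟩
        rcases hcases T hT with h | h
        · exact absurd ⟨T, h⟩ hx1
        · exact absurd ⟨T, h⟩ hx2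
  · intro htri
    obtain ⟨t, s, r, hts, htr, hsr⟩ := htri
    obtain ⟨hretr, hrpar, T, hT, ⟨D1, hD1⟩, ⟨D2, hD2⟩⟩ := triangle_tree N hN h1 hts htr hsr
    refine ⟨T, ⟨hT, D1.E', D1.φ, D1.sub, D1.div, D1.flab⟩, ?_⟩
    rintro T' ⟨hT', E', φ, hsubE, hdiv, hlab⟩
    set D' : Emb N T' := ⟨E', φ, hsubE, hdiv, hlab⟩ with hD'
    obtain ⟨ret, p, hret, hp, hchar⟩ := D'.char hN h1 hT'
    have hrr : ret = r := by
      obtain ⟨r0, _, hr0u⟩ := unique_of_card_one h1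
      exact (hr0u ret hret).trans (hr0u r hretr).symm
    rw [hrr] at hchar hp
    rcases hrpar p hp with h | h <;> rw [h] at hchar
    · exact iso_of_same hN h1 hT' hT D' D1 (fun a b => (hchar a b).trans ((hD1 a b).symm))
    · exact iso_of_same hN h1 hT' hT D' D2 (fun a b => (hchar a b).trans ((hD2 a b).symm))

end Phylo
end
end

section
/- Let M and M' be tier-1 binary phylogenetic networks, each containing a triangle, such that M' is obtained from M by a single head move. Then M and M' have the same (unique) embedded tree. -/
noncomputable section

namespace Phylo

/-! ### Helper lemmas -/

section Helpers
open Relation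

variable {V : Type}

lemma card_ne_zero_of_mem {P : V → Prop} [Finite V] {a : V} (h : P a) :
    Nat.card {x // P x} ≠ 0 := by
  haveI : Nonempty {x // P x} := ⟨⟨a, h⟩⟩
  exact Nat.card_pos.ne'

lemma not_of_card_eq_zero {P : V → Prop} [Finite V] (h : Nat.card {x // P x} = 0) :
    ∀ a, ¬ P a := fun _ ha => card_ne_zero_of_mem ha h

lemma exists_of_card_eq_one {P : V → Prop} [Finite V] (h : Nat.card {x // P x} = 1) :
    ∃ a, P a := by
  obtain ⟨-, ⟨a⟩⟩ := Nat.card_eq_one_iff_unique.mp h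
  exact ⟨a.1, a.2⟩

lemma eq_of_card_eq_one {P : V → Prop} (h : Nat.card {x // P x} = 1)
    {a b : V} (ha : P a) (hb : P b) : a = b := by
  have hs := (Nat.card_eq_one_iff_unique.mp h).1
  exact congrArg Subtype.val (hs.elim ⟨a, ha⟩ ⟨b, hb⟩)

lemma card_eq_one_of {P : V → Prop} {a : V} (ha : P a) (hu : ∀ b, P b → b = a) :
    Nat.card {x // P x} = 1 :=
  Nat.card_eq_one_iff_unique.mpr
    ⟨⟨fun x y => Subtype.ext ((hu _ x.2).trans (hu _ y.2).symm)⟩, ⟨⟨a, ha⟩⟩⟩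

lemma mem_pair_of_card_eq_two {P : V → Prop} (h : Nat.card {x // P x} = 2)
    {u p : V} (hu : P u) (hp : P p) (hne : u ≠ p) : ∀ a, P a → a = u ∨ a = p := by
  intro a ha
  rcases Nat.card_eq_two_iff.mp h with ⟨x, y, hxy, hall⟩
  have mem : ∀ z : {x // P x}, z = x ∨ z = y := by
    intro z
    have : z ∈ ({x, y} : Set {x // P x}) := by rw [hall]; trivial
    simpa using this
  rcases mem ⟨a, ha⟩ with h1 | h1 <;> rcases mem ⟨u, hu⟩ with h2 | h2 <;>
    rcases mem ⟨p, hp⟩ with h3 | h3 <;>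
    first
      | (left; exact congrArg Subtype.val (h1.trans h2.symm))
      | (right; exact congrArg Subtype.val (h1.trans h3.symm))
      | (exact absurd (congrArg Subtype.val (h2.trans h3.symm)) hne)

lemma indeg_congr {E E' : V → V → Prop} {v : V} (h : ∀ a, E a v ↔ E' a v) :
    indeg E v = indeg E' v := Nat.card_congr (Equiv.subtypeEquivRight h)

lemma outdeg_congr {E E' : V → V → Prop} {v : V} (h : ∀ b, E v b ↔ E' v b) :
    outdeg E v = outdeg E' v := Nat.card_congr (Equiv.subtypeEquivRight h)

lemma Acyclic.not_self {E : V → V → Prop} (h : Acyclic E) {x : V} : ¬ E x x :=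
  fun he => h x (TransGen.single he)

lemma Acyclic.edge_ne {E : V → V → Prop} (h : Acyclic E) {x y : V} (he : E x y) : x ≠ y :=
  fun hxy => h.not_self (hxy ▸ he)

lemma Acyclic.not_rev {E : V → V → Prop} (h : Acyclic E) {x y : V} (he : E x y) : ¬ E y x :=
  fun h2 => h x ((TransGen.single he).trans (TransGen.single h2))

lemma Acyclic.sub {E E' : V → V → Prop} (hle : ∀ a b, E' a b → E a b) (h : Acyclic E) :
    Acyclic E' := fun v hv => h v (TransGen.mono (fun a b => hle a b) v v hv)

lemma Acyclic.swap {E : V → V → Prop} (h : Acyclic E) : Acyclic (Function.swap E) :=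
  fun v hv => h v (Relation.transGen_swap.mp hv)

lemma Acyclic.wf {E : V → V → Prop} [Finite V] (h : Acyclic E) :
    WellFounded (Relation.TransGen E) := by
  haveI : IsTrans V (TransGen E) := ⟨fun _ _ _ => TransGen.trans⟩
  haveI : IsIrrefl V (TransGen E) := ⟨h⟩
  exact @Finite.wellFounded_of_trans_of_irrefl V _ (TransGen E) _ _

lemma chain_head {R : V → V → Prop} {a : V} {l : List V} (h : List.Chain R a l) (hne : l ≠ []) :
    R a (l.head hne) := by
  cases l with
  | nil => simp at hne
  | cons b t => exact (List.chain_cons.mp h).1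

lemma chain_last {R : V → V → Prop} {a y : V} {l : List V} (h : List.Chain R a (l ++ [y])) :
    ∃ z, R z y := by
  induction l generalizing a with
  | nil => exact ⟨a, (List.chain_cons.mp h).1⟩
  | cons b t ih => exact ih (List.chain_cons.mp h).2

lemma chain_swap {R : V → V → Prop} {x y : V} {l : List V}
    (h : List.Chain R x (l ++ [y])) : List.Chain (Function.swap R) y (l.reverse ++ [x]) := by
  have h' : List.Chain' R (x :: (l ++ [y])) := h
  have h2 : List.Chain' (Function.swap R) ((x :: (l ++ [y])).reverse) := by
    exact List.isChain_reverse.mpr h'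
  have : (x :: (l ++ [y])).reverse = y :: (l.reverse ++ [x]) := by simp
  rw [this] at h2
  exact h2

end Helpers

/-! ### Transport along labelled isomorphisms -/

section Iso
open Relation

lemma NetIso.refl' {X : Type} (N : Net X) : NetIso N N :=
  ⟨Equiv.refl _, fun _ _ => Iff.rfl, fun x => Eq.refl (N.lab x)⟩

lemma NetIso.symm {X : Type} {N N' : Net X} (h : NetIso N N') : NetIso N' N := by
  obtain ⟨φ, he, hl⟩ := h
  exact ⟨φ.symm, fun a b => by simpa using (he (φ.symm a) (φ.symm b)).symm,
    fun x => by simp [← hl x]⟩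

lemma NetIso.trans {X : Type} {N₁ N₂ N₃ : Net X} (h : NetIso N₁ N₂) (h' : NetIso N₂ N₃) :
    NetIso N₁ N₃ := by
  obtain ⟨φ, he, hl⟩ := h
  obtain ⟨φ', he', hl'⟩ := h'
  exact ⟨φ.trans φ', fun a b => (he a b).trans (he' _ _), fun x => by simp [Equiv.trans]; rw [hl, hl']⟩

variable {V W X : Type} [Fintype V] [Fintype W]

lemma indeg_equiv (ψ : V ≃ W) {E : V → V → Prop} {E' : W → W → Prop}
    (he : ∀ a b, E a b ↔ E' (ψ a) (ψ b)) (v : V) : indeg E' (ψ v) = indeg E v :=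
  Nat.card_congr ((ψ.subtypeEquiv (fun a => he a v)).symm)

lemma outdeg_equiv (ψ : V ≃ W) {E : V → V → Prop} {E' : W → W → Prop}
    (he : ∀ a b, E a b ↔ E' (ψ a) (ψ b)) (v : V) : outdeg E' (ψ v) = outdeg E v :=
  Nat.card_congr ((ψ.subtypeEquiv (fun b => he v b)).symm)

lemma LabIso.isPhyloNet {E : V → V → Prop} {E' : W → W → Prop} {lab : X → V} {lab' : X → W}
    (h : LabIso E lab E' lab') (hN : IsPhyloNet E lab) : IsPhyloNet E' lab' := by
  obtain ⟨ψ, he, hl⟩ := h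
  have hroot : ∀ v, IsRoot E' (ψ v) ↔ IsRoot E v := fun v => by
    unfold IsRoot; rw [indeg_equiv ψ he, outdeg_equiv ψ he]
  have hleaf : ∀ v, IsLeafNode E' (ψ v) ↔ IsLeafNode E v := fun v => by
    unfold IsLeafNode; rw [indeg_equiv ψ he, outdeg_equiv ψ he]
  have hsplit : ∀ v, IsSplit E' (ψ v) ↔ IsSplit E v := fun v => by
    unfold IsSplit; rw [indeg_equiv ψ he, outdeg_equiv ψ he]
  have hret : ∀ v, IsRetic E' (ψ v) ↔ IsRetic E v := fun v => by
    unfold IsRetic; rw [indeg_equiv ψ he, outdeg_equiv ψ he]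
  refine ⟨?_, ?_, ?_, ?_, ?_⟩
  · intro w hw
    refine hN.acyclic (ψ.symm w) ?_
    refine TransGen.lift ψ.symm (fun a b hab => ?_) w w hw
    exact (he _ _).mpr (by simpa using hab)
  · obtain ⟨ρ, hρ, hρu⟩ := hN.root_unique
    refine ⟨ψ ρ, (hroot ρ).mpr hρ, fun w hw => ?_⟩
    have := hρu (ψ.symm w) ((hroot (ψ.symm w)).mp (by simpa using hw))
    rw [← this]; simp
  · intro x y hxy
    apply hN.lab_inj
    apply ψ.injective
    rw [hl, hl, hxy]
  · intro w
    constructor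
    · intro hw
      obtain ⟨x, hx⟩ := (hN.leaf_iff (ψ.symm w)).mp
        ((hleaf (ψ.symm w)).mp (by simpa using hw))
      exact ⟨x, by rw [← hl, hx]; simp⟩
    · rintro ⟨x, rfl⟩
      rw [← hl]
      exact (hleaf _).mpr ((hN.leaf_iff _).mpr ⟨x, rfl⟩)
  · intro w
    have hw : ψ (ψ.symm w) = w := by simp
    rcases hN.node_types (ψ.symm w) with h|h|h|h
    · exact Or.inl (by rw [← hw]; exact (hroot _).mpr h)
    · exact Or.inr (Or.inl (by rw [← hw]; exact (hleaf _).mpr h))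
    · exact Or.inr (Or.inr (Or.inl (by rw [← hw]; exact (hsplit _).mpr h)))
    · exact Or.inr (Or.inr (Or.inr (by rw [← hw]; exact (hret _).mpr h)))

lemma LabIso.reticCount_eq {E : V → V → Prop} {E' : W → W → Prop} {lab : X → V} {lab' : X → W}
    (h : LabIso E lab E' lab') : reticCount E' = reticCount E := by
  obtain ⟨ψ, he, hl⟩ := h
  have hret : ∀ v, IsRetic E v ↔ IsRetic E' (ψ v) := fun v => by
    unfold IsRetic; rw [indeg_equiv ψ he, outdeg_equiv ψ he]
  exact (Nat.card_congr (ψ.subtypeEquiv hret)).symm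

lemma LabIso.hasTriangle {E : V → V → Prop} {E' : W → W → Prop} {lab : X → V} {lab' : X → W}
    (h : LabIso E lab E' lab') (hΔ : HasTriangle E) : HasTriangle E' := by
  obtain ⟨ψ, he, hl⟩ := h
  obtain ⟨t, s, r, h1, h2, h3⟩ := hΔ
  exact ⟨ψ t, ψ s, ψ r, (he _ _).mp h1, (he _ _).mp h2, (he _ _).mp h3⟩

lemma EmbeddedTree.transfer_net {X : Type} {T N N' : Net X} (hE : EmbeddedTree T N)
    (h : NetIso N N') : EmbeddedTree T N' := by
  obtain ⟨hT, E', φ, hsub, ⟨hinj, hred, hiff⟩, hlab⟩ := hE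
  obtain ⟨ψ, he, hl⟩ := h
  refine ⟨hT, fun x y => E' (ψ.symm x) (ψ.symm y), fun a => ψ (φ a), ?_, ⟨?_, ?_, ?_⟩, ?_⟩
  · intro a b hab
    have := (he _ _).mp (hsub _ _ hab)
    simpa using this
  · intro x y hxy
    exact hinj (ψ.injective hxy)
  · intro v hv
    have hv' : ψ.symm v ∉ Set.range φ := by
      rintro ⟨a, ha⟩
      exact hv ⟨a, by show ψ (φ a) = v; rw [ha]; simp⟩
    obtain ⟨h1, h2⟩ := hred _ hv'
    constructor
    · rw [← h1]
      exact Nat.card_congr (ψ.symm.subtypeEquiv (fun a => Iff.rfl))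
    · rw [← h2]
      exact Nat.card_congr (ψ.symm.subtypeEquiv (fun a => Iff.rfl))
  · intro a b
    rw [hiff a b]
    constructor
    · rintro ⟨l, hc, hax⟩
      refine ⟨l.map ψ, ?_, ?_⟩
      · have : l.map ψ ++ [ψ (φ b)] = (l ++ [φ b]).map ψ := by simp
        rw [this]; refine (List.isChain_cons_map ψ).mpr ?_
        refine List.Chain.imp (fun x y hxy => ?_) hc
        simpa using hxy
      · rintro x hx ⟨a', ha'⟩
        obtain ⟨y, hy, rfl⟩ := List.mem_map.mp hx
        exact hax y hy ⟨a', ψ.injective ha'⟩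
    · rintro ⟨l, hc, hax⟩
      refine ⟨l.map ψ.symm, ?_, ?_⟩
      · have goal_eq : (l.map ψ.symm ++ [φ b]) = (l ++ [ψ (φ b)]).map ψ.symm := by simp
        rw [goal_eq]
        have ha2 : φ a = ψ.symm (ψ (φ a)) := by simp
        rw [ha2]
        exact (List.isChain_cons_map ψ.symm).mpr hc
      · rintro x hx ⟨a', ha'⟩
        obtain ⟨y, hy, rfl⟩ := List.mem_map.mp hx
        exact hax y hy ⟨a', by show ψ (φ a') = y; rw [ha']; simp⟩
  · intro x
    show ψ (φ (T.lab x)) = N'.lab x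
    rw [hlab x, hl x]

end Iso

lemma IsTree.transfer {X : Type} {T T' : Net X} (hT : IsTree T) (h : NetIso T T') : IsTree T' :=
  ⟨LabIso.isPhyloNet h hT.1, by rw [LabIso.reticCount_eq h, hT.2]⟩

lemma EmbeddedTree.transfer_tree {X : Type} {T T' N : Net X} (hE : EmbeddedTree T N)
    (h : NetIso T T') : EmbeddedTree T' N := by
  obtain ⟨hT, E', φ, hsub, ⟨hinj, hred, hiff⟩, hlab⟩ := hE
  have hT' : IsTree T' := hT.transfer h
  obtain ⟨ψ, he, hl⟩ := h
  refine ⟨hT', E', fun a => φ (ψ.symm a), hsub, ⟨?_, ?_, ?_⟩, ?_⟩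
  · intro x y hxy
    exact ψ.symm.injective (hinj hxy)
  · intro v hv
    refine hred v ?_
    rintro ⟨a, ha⟩
    exact hv ⟨ψ a, by show φ (ψ.symm (ψ a)) = v; simpa using ha⟩
  · intro a b
    have hiff' : T'.E a b ↔ T.E (ψ.symm a) (ψ.symm b) := by
      rw [he (ψ.symm a) (ψ.symm b)]; simp
    rw [hiff', hiff]
    constructor
    · rintro ⟨l, hc, hax⟩
      refine ⟨l, hc, fun x hx hmem => hax x hx ?_⟩
      obtain ⟨a', ha'⟩ := hmem
      exact ⟨ψ.symm a', ha'⟩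
    · rintro ⟨l, hc, hax⟩
      refine ⟨l, hc, fun x hx hmem => hax x hx ?_⟩
      obtain ⟨a', ha'⟩ := hmem
      exact ⟨ψ a', by show φ (ψ.symm (ψ a')) = x; simpa using ha'⟩
  · intro x
    show φ (ψ.symm (T'.lab x)) = N.lab x
    rw [← hl x]
    simpa using hlab x

/-! ### Following paths in a subdivision -/

section Trace
open Relation

variable {V : Type} [Fintype V]

lemma follow {E : V → V → Prop} {S : Set V} (hac : Acyclic E)
    (hdeg : ∀ x, x ∉ S → outdeg E x = 1) (x : V) : x ∉ S →
    ∃ (l : List V) (b : V), b ∈ S ∧ List.Chain E x (l ++ [b]) ∧ ∀ z ∈ x :: l, z ∉ S := by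
  induction x using WellFounded.induction (Acyclic.wf (hac.swap)) with
  | _ x ih =>
    intro hx
    obtain ⟨y, hy⟩ := exists_of_card_eq_one (hdeg x hx)
    by_cases hyS : y ∈ S
    · refine ⟨[], y, hyS, List.Chain.cons hy List.Chain.nil, ?_⟩
      intro z hz; simp at hz; subst hz; exact hx
    · obtain ⟨l, b, hb, hchain, havoid⟩ := ih y (TransGen.single hy) hyS
      refine ⟨y :: l, b, hb, List.Chain.cons hy hchain, ?_⟩
      intro z hz
      rcases List.mem_cons.mp hz with rfl | hz
      · exact hx
      · exact havoid z hz

lemma follow_unique {E : V → V → Prop} {S : Set V}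
    (hdeg : ∀ x, x ∉ S → outdeg E x = 1) :
    ∀ (l₁ : List V) {l₂ : List V} {x b₁ b₂ : V}, x ∉ S →
      List.Chain E x (l₁ ++ [b₁]) → List.Chain E x (l₂ ++ [b₂]) →
      (∀ z ∈ l₁, z ∉ S) → (∀ z ∈ l₂, z ∉ S) → b₁ ∈ S → b₂ ∈ S → b₁ = b₂ := by
  intro l₁
  induction l₁ with
  | nil =>
    intro l₂ x b₁ b₂ hx h1 h2 _ hl₂ hb₁ hb₂
    have e1 : E x b₁ := (List.chain_cons.mp h1).1
    cases l₂ with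
    | nil => exact eq_of_card_eq_one (hdeg x hx) e1 (List.chain_cons.mp h2).1
    | cons z t =>
      have e2 : E x z := (List.chain_cons.mp h2).1
      have : b₁ = z := eq_of_card_eq_one (hdeg x hx) e1 e2
      exact absurd hb₁ (by rw [this]; exact hl₂ z (by simp))
  | cons z₁ t₁ ih =>
    intro l₂ x b₁ b₂ hx h1 h2 hl₁ hl₂ hb₁ hb₂
    have e1 : E x z₁ := (List.chain_cons.mp h1).1
    cases l₂ with
    | nil =>
      have e2 : E x b₂ := (List.chain_cons.mp h2).1
      have hzb : z₁ = b₂ := eq_of_card_eq_one (hdeg x hx) e1 e2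
      exact absurd (hzb ▸ hb₂) (hl₁ z₁ (by simp))
    | cons z₂ t₂ =>
      have e2 : E x z₂ := (List.chain_cons.mp h2).1
      have hz : z₁ = z₂ := eq_of_card_eq_one (hdeg x hx) e1 e2
      subst hz
      exact ih (hl₁ z₁ (by simp)) (List.chain_cons.mp h1).2 (List.chain_cons.mp h2).2
        (fun z hz => hl₁ z (by simp [hz])) (fun z hz => hl₂ z (by simp [hz])) hb₁ hb₂

variable {W : Type} [Fintype W] {E : V → V → Prop} {F : W → W → Prop} {φ : W → V}

lemma subdiv_out_ge
    (hiff : ∀ a b, F a b ↔ ∃ l, List.Chain E (φ a) (l ++ [φ b]) ∧ ∀ x ∈ l, x ∉ Set.range φ)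
    (hac : Acyclic E)
    (hred : ∀ x, x ∉ Set.range φ → indeg E x = 1 ∧ outdeg E x = 1)
    {a : W} {x : V} (he : E (φ a) x) : ∃ b, F a b := by
  by_cases hx : x ∈ Set.range φ
  · obtain ⟨b, rfl⟩ := hx
    exact ⟨b, (hiff a b).mpr ⟨[], List.Chain.cons he List.Chain.nil, by simp⟩⟩
  · obtain ⟨l, bv, hb, hchain, havoid⟩ := follow hac (fun z hz => (hred z hz).2) x hx
    obtain ⟨b, rfl⟩ := hb
    exact ⟨b, (hiff a b).mpr ⟨x :: l, List.Chain.cons he hchain, havoid⟩⟩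

lemma subdiv_out_le
    (hiff : ∀ a b, F a b ↔ ∃ l, List.Chain E (φ a) (l ++ [φ b]) ∧ ∀ x ∈ l, x ∉ Set.range φ)
    (hinj : Function.Injective φ)
    (hred : ∀ x, x ∉ Set.range φ → indeg E x = 1 ∧ outdeg E x = 1)
    (a : W) : outdeg F a ≤ outdeg E (φ a) := by
  classical
  have H : ∀ b : {b // F a b}, ∃ x : V, E (φ a) x ∧
      (x = φ b.1 ∨ (x ∉ Set.range φ ∧
        ∃ l, List.Chain E x (l ++ [φ b.1]) ∧ ∀ z ∈ l, z ∉ Set.range φ)) := by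
    intro b
    obtain ⟨l, hc, hav⟩ := (hiff a b.1).mp b.2
    cases l with
    | nil => exact ⟨φ b.1, (List.chain_cons.mp hc).1, Or.inl rfl⟩
    | cons y t =>
      exact ⟨y, (List.chain_cons.mp hc).1, Or.inr ⟨hav y (by simp), t,
        (List.chain_cons.mp hc).2, fun z hz => hav z (by simp [hz])⟩⟩
  choose g hg1 hg2 using H
  have hginj : Function.Injective g := by
    intro b₁ b₂ hb
    rcases hg2 b₁ with h1 | ⟨hnr1, l₁, hc1, hav1⟩ <;> rcases hg2 b₂ with h2 | ⟨hnr2, l₂, hc2, hav2⟩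
    · exact Subtype.ext (hinj (h1 ▸ hb ▸ h2 : φ b₁.1 = φ b₂.1).symm ▸ rfl)
    · exact absurd ⟨b₁.1, show φ b₁.1 = g b₂ by rw [← h1, hb]⟩ hnr2
    · exact absurd ⟨b₂.1, show φ b₂.1 = g b₁ by rw [← h2, hb]⟩ hnr1
    · have := follow_unique (fun z hz => (hred z hz).2) l₁ (l₂ := l₂) hnr1 hc1 (hb ▸ hc2)
        hav1 hav2 ⟨b₁.1, rfl⟩ ⟨b₂.1, rfl⟩
      exact Subtype.ext (hinj this)
  calc outdeg F a = Nat.card {b // F a b} := rfl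
    _ ≤ Nat.card {x // E (φ a) x} :=
        Nat.card_le_card_of_injective (fun b => ⟨g b, hg1 b⟩)
          (fun b₁ b₂ h => hginj (congrArg Subtype.val h))
    _ = outdeg E (φ a) := rfl

lemma hiff_swap
    (hiff : ∀ a b, F a b ↔ ∃ l, List.Chain E (φ a) (l ++ [φ b]) ∧ ∀ x ∈ l, x ∉ Set.range φ) :
    ∀ a b, Function.swap F a b ↔
      ∃ l, List.Chain (Function.swap E) (φ a) (l ++ [φ b]) ∧ ∀ x ∈ l, x ∉ Set.range φ := by
  intro a b
  rw [show Function.swap F a b = F b a from rfl, hiff b a]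
  constructor
  · rintro ⟨l, hc, hav⟩
    exact ⟨l.reverse, chain_swap hc, fun x hx => hav x (by simpa using hx)⟩
  · rintro ⟨l, hc, hav⟩
    refine ⟨l.reverse, ?_, fun x hx => hav x (by simpa using hx)⟩
    exact chain_swap hc

lemma subdiv_range_spec {X : Type} {T : Net X} {E : V → V → Prop} {φ : T.V → V}
    (hval : T.valid) (hac : Acyclic E) (hsub : IsSubdivision T.E E φ) :
    ∀ v : V, v ∈ Set.range φ ↔ ¬ (indeg E v = 1 ∧ outdeg E v = 1) := by
  obtain ⟨hinj, hred, hiff⟩ := hsub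
  intro v
  constructor
  · rintro ⟨a, rfl⟩ ⟨h1, h2⟩
    have hout1 : ∃ b, T.E a b := by
      obtain ⟨y, hy⟩ := exists_of_card_eq_one h2
      exact subdiv_out_ge hiff hac hred hy
    have hin1 : ∃ b, T.E b a := by
      obtain ⟨y, hy⟩ := exists_of_card_eq_one h1
      obtain ⟨b, hb⟩ := subdiv_out_ge (E := Function.swap E) (F := Function.swap T.E) (φ := φ)
        (hiff_swap hiff) hac.swap (fun x hx => ⟨(hred x hx).2, (hred x hx).1⟩)
        (a := a) (x := y) hy
      exact ⟨b, hb⟩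
    have hole : outdeg T.E a ≤ 1 := h2 ▸ subdiv_out_le hiff hinj hred a
    have hile : indeg T.E a ≤ 1 := by
      have := subdiv_out_le (E := Function.swap E) (F := Function.swap T.E) (φ := φ)
        (hiff_swap hiff) hinj (fun x hx => ⟨(hred x hx).2, (hred x hx).1⟩) a
      exact h1 ▸ this
    have ho : outdeg T.E a = 1 := by
      obtain ⟨b, hb⟩ := hout1
      have h0 : outdeg T.E a ≠ 0 := card_ne_zero_of_mem hb
      omega
    have hi : indeg T.E a = 1 := by
      obtain ⟨b, hb⟩ := hin1
      have h0 : indeg T.E a ≠ 0 := card_ne_zero_of_mem hb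
      omega
    rcases hval.node_types a with h|h|h|h <;>
      simp only [IsRoot, IsLeafNode, IsSplit, IsRetic] at h <;> omega
  · intro h
    by_contra hv
    exact h (hred v hv)

lemma subdiv_unique {X : Type} {E : V → V → Prop} {labN : X → V}
    {T₁ T₂ : Net X} {φ₁ : T₁.V → V} {φ₂ : T₂.V → V}
    (h₁ : IsTree T₁) (h₂ : IsTree T₂) (hac : Acyclic E)
    (s₁ : IsSubdivision T₁.E E φ₁) (s₂ : IsSubdivision T₂.E E φ₂)
    (hl₁ : ∀ x, φ₁ (T₁.lab x) = labN x) (hl₂ : ∀ x, φ₂ (T₂.lab x) = labN x) :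
    NetIso T₁ T₂ := by
  have hr₁ := subdiv_range_spec h₁.1 hac s₁
  have hr₂ := subdiv_range_spec h₂.1 hac s₂
  have hrange : Set.range φ₁ = Set.range φ₂ := by
    ext v; rw [hr₁ v, hr₂ v]
  have hf : ∀ a : T₁.V, ∃ b : T₂.V, φ₂ b = φ₁ a := fun a => by
    have : φ₁ a ∈ Set.range φ₂ := hrange ▸ Set.mem_range_self a
    exact this
  have hg : ∀ b : T₂.V, ∃ a : T₁.V, φ₁ a = φ₂ b := fun b => by
    have : φ₂ b ∈ Set.range φ₁ := hrange ▸ Set.mem_range_self b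
    exact this
  choose f hfspec using hf
  choose g hgspec using hg
  have hfg : ∀ a, g (f a) = a := fun a => s₁.1 (by rw [hgspec, hfspec])
  have hgf : ∀ b, f (g b) = b := fun b => s₂.1 (by rw [hfspec, hgspec])
  refine ⟨⟨f, g, hfg, hgf⟩, ?_, ?_⟩
  · intro a b
    show T₁.E a b ↔ T₂.E (f a) (f b)
    rw [s₁.2.2 a b, s₂.2.2 (f a) (f b), hfspec a, hfspec b, hrange]
  · intro x
    show f (T₁.lab x) = T₂.lab x
    apply s₂.1
    rw [hfspec, hl₂, hl₁]

end Trace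

/-! ### Structure of valid networks -/

section Struct
open Relation

lemma transGen_lift_trans {α β : Type} {R : α → α → Prop} {S : β → β → Prop} (f : α → β)
    (h : ∀ a b, R a b → Relation.TransGen S (f a) (f b)) {a b : α}
    (ht : Relation.TransGen R a b) : Relation.TransGen S (f a) (f b) := by
  induction ht with
  | single h' => exact h _ _ h'
  | tail _ h' ih => exact ih.trans (h _ _ h')

variable {V X : Type} [Fintype V] {E : V → V → Prop} {lab : X → V}

lemma retic_of_two_parents (hN : IsPhyloNet E lab) {u p v : V} (hu : E u v) (hp : E p v)
    (hne : u ≠ p) : IsRetic E v := by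
  rcases hN.node_types v with h|h|h|h
  · exact absurd h.1 (card_ne_zero_of_mem hu)
  · exact absurd (eq_of_card_eq_one h.1 hu hp) hne
  · exact absurd (eq_of_card_eq_one h.1 hu hp) hne
  · exact h

lemma split_of_two_children (hN : IsPhyloNet E lab) {u b₁ b₂ : V} (h1 : E u b₁) (h2 : E u b₂)
    (hne : b₁ ≠ b₂) : IsSplit E u := by
  rcases hN.node_types u with h|h|h|h
  · exact absurd (eq_of_card_eq_one h.2 h1 h2) hne
  · exact absurd h.2 (card_ne_zero_of_mem h1)
  · exact h
  · exact absurd (eq_of_card_eq_one h.2 h1 h2) hne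

lemma retic_unique (h1 : reticCount E = 1) {x y : V} (hx : IsRetic E x) (hy : IsRetic E y) :
    x = y := eq_of_card_eq_one h1 hx hy

lemma parents_spec {u p v : V} (hv : IsRetic E v) (hu : E u v) (hp : E p v) (hne : u ≠ p) :
    ∀ a, E a v → a = u ∨ a = p := mem_pair_of_card_eq_two hv.1 hu hp hne

lemma child_spec {v c : V} (hv : IsRetic E v) (hc : E v c) : ∀ b, E v b → b = c :=
  fun _ hb => eq_of_card_eq_one hv.2 hb hc

lemma indeg_one_parent {u : V} (h : indeg E u = 1) :
    ∃ pu, E pu u ∧ ∀ a, E a u → a = pu := by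
  obtain ⟨pu, hpu⟩ := exists_of_card_eq_one h
  exact ⟨pu, hpu, fun a ha => eq_of_card_eq_one h ha hpu⟩

lemma split_other_child {u : V} (hu : IsSplit E u) {v : V} (h1 : E u v) :
    ∃ w, E u w ∧ w ≠ v ∧ ∀ b, E u b → b = v ∨ b = w := by
  rcases Nat.card_eq_two_iff.mp hu.2 with ⟨x, y, hxy, hall⟩
  have mem : ∀ z : {b // E u b}, z = x ∨ z = y := by
    intro z
    have : z ∈ ({x, y} : Set {b // E u b}) := by rw [hall]; trivial
    simpa using this
  rcases mem ⟨v, h1⟩ with h | h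
  · refine ⟨y.1, y.2, fun hyv => hxy (by rw [← h]; exact (Subtype.ext hyv).symm), ?_⟩
    intro b hb
    rcases mem ⟨b, hb⟩ with h2 | h2
    · exact Or.inl (congrArg Subtype.val (h2.trans h.symm))
    · exact Or.inr (congrArg Subtype.val h2)
  · refine ⟨x.1, x.2, fun hxv => hxy (by rw [← h]; exact Subtype.ext hxv), ?_⟩
    intro b hb
    rcases mem ⟨b, hb⟩ with h2 | h2
    · exact Or.inr (congrArg Subtype.val h2)
    · exact Or.inl (congrArg Subtype.val (h2.trans h.symm))

lemma triangle_struct (hN : IsPhyloNet E lab) (h1 : reticCount E = 1) (hΔ : HasTriangle E) :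
    ∃ t s r c, E t s ∧ E t r ∧ E s r ∧ IsRetic E r ∧ IsSplit E t ∧ IsSplit E s ∧ E r c := by
  obtain ⟨t, s, r, hts, htr, hsr⟩ := hΔ
  have hac := hN.acyclic
  have htsne : t ≠ s := hac.edge_ne hts
  have hretr : IsRetic E r := retic_of_two_parents hN htr hsr htsne
  have hsrne : s ≠ r := hac.edge_ne hsr
  have hsplitt : IsSplit E t := split_of_two_children hN hts htr hsrne
  have hsplits : IsSplit E s := by
    rcases hN.node_types s with h|h|h|h
    · exact absurd h.1 (card_ne_zero_of_mem hts)
    · exact absurd h.2 (card_ne_zero_of_mem hsr)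
    · exact h
    · exact absurd (retic_unique h1 h hretr) hsrne
  obtain ⟨c, hc⟩ := exists_of_card_eq_one hretr.2
  exact ⟨t, s, r, c, hts, htr, hsr, hretr, hsplitt, hsplits, hc⟩

end Struct

/-! ### The suppressed tree obtained by deleting a reticulation edge -/

section Del
open Relation

variable {X : Type}

/-- The tree obtained from `N` by deleting the reticulation edge `(u,v)` and
suppressing the two resulting redundant nodes `u` and `v`. -/
def delNet (N : Net X) (u v : N.V) (hlab : ∀ x, N.lab x ≠ u ∧ N.lab x ≠ v) : Net X where
  V := {x : N.V // x ≠ u ∧ x ≠ v}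
  fin := Fintype.ofFinite _
  E := fun a b => N.E a.1 b.1 ∨ (N.E a.1 u ∧ N.E u b.1) ∨ (N.E a.1 v ∧ N.E v b.1)
  lab := fun x => ⟨N.lab x, hlab x⟩

variable {N : Net X} {u v p c : N.V}

/-- Bundle of basic hypotheses in the deletion context: `v` is the unique reticulation
of `N`, with parents `u ≠ p` and child `c`, and `u` is a split node. -/
structure DelCtx (N : Net X) (u v p c : N.V) : Prop where
  hN : N.valid
  h1 : reticCount N.E = 1
  huv : N.E u v
  hpv : N.E p v
  hpu : p ≠ u
  hvc : N.E v c
  hsu : IsSplit N.E u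

namespace DelCtx

variable {N : Net X} {u v p c : N.V}

lemma hac (d : DelCtx N u v p c) : Acyclic N.E := d.hN.acyclic
lemma hretv (d : DelCtx N u v p c) : IsRetic N.E v := retic_of_two_parents d.hN d.huv d.hpv (Ne.symm d.hpu)
lemma hparents (d : DelCtx N u v p c) : ∀ a, N.E a v → a = u ∨ a = p :=
  parents_spec d.hretv d.huv d.hpv (Ne.symm d.hpu)
lemma hchildv (d : DelCtx N u v p c) : ∀ b, N.E v b → b = c := child_spec d.hretv d.hvc
lemma huvne (d : DelCtx N u v p c) : u ≠ v := d.hac.edge_ne d.huv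
lemma hpvne (d : DelCtx N u v p c) : p ≠ v := d.hac.edge_ne d.hpv
lemma hcv (d : DelCtx N u v p c) : c ≠ v := (d.hac.edge_ne d.hvc).symm
lemma hcu (d : DelCtx N u v p c) : c ≠ u := fun h => d.hac.not_rev d.huv (h ▸ d.hvc)
lemma hlab (d : DelCtx N u v p c) : ∀ x, N.lab x ≠ u ∧ N.lab x ≠ v := by
  intro x
  have hleaf : IsLeafNode N.E (N.lab x) := (d.hN.leaf_iff _).mpr ⟨x, rfl⟩
  constructor
  · intro h
    have h2 := d.hsu.2
    rw [← h, hleaf.2] at h2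
    omega
  · intro h
    have h2 := d.hretv.2
    rw [← h, hleaf.2] at h2
    omega

/-- The suppressed tree. -/
def T (d : DelCtx N u v p c) : Net X := delNet N u v d.hlab

lemma TE_iff (d : DelCtx N u v p c) (a b : d.T.V) : d.T.E a b ↔
    (N.E a.1 b.1 ∨ (N.E a.1 u ∧ N.E u b.1) ∨ (N.E a.1 v ∧ N.E v b.1)) := Iff.rfl

lemma T_outdeg (d : DelCtx N u v p c) (x : d.T.V) : outdeg d.T.E x = outdeg N.E x.1 := by
  classical
  obtain ⟨w, huw, hwv, hcuspec⟩ := split_other_child d.hsu d.huv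
  have hwu : w ≠ u := (d.hac.edge_ne huw).symm
  set θ : N.V → N.V := fun b => if b = u then w else if b = v then c else b with hθ
  have θval : ∀ b, b ≠ u → b ≠ v → θ b = b := fun b h1 h2 => by simp [hθ, h1, h2]
  have θu : θ u = w := by simp [hθ]
  have θv : θ v = c := by simp [hθ, d.huvne.symm]
  have retw : ∀ b, N.E x.1 b → b ≠ u → b ≠ v → b ≠ w := by
    intro b hb hbu hbv hbw
    subst hbw
    have : IsRetic N.E b := retic_of_two_parents d.hN huw hb (fun h => x.2.1 h.symm)
    exact hwv (retic_unique d.h1 this d.hretv)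
  have retc : ∀ b, N.E x.1 b → b ≠ u → b ≠ v → b ≠ c := by
    intro b hb hbu hbv hbc
    subst hbc
    have : IsRetic N.E b := retic_of_two_parents d.hN d.hvc hb (fun h => x.2.2 h.symm)
    exact d.hcv (retic_unique d.h1 this d.hretv)
  have hwc : w ≠ c := by
    intro h
    have : IsRetic N.E c := retic_of_two_parents d.hN d.hvc (h ▸ huw) (Ne.symm d.huvne)
    exact d.hcv (retic_unique d.h1 this d.hretv)
  have tri : ∀ b : N.V, b = u ∨ b = v ∨ (b ≠ u ∧ b ≠ v) := by tauto
  have θinj : ∀ b₁ b₂, N.E x.1 b₁ → N.E x.1 b₂ → θ b₁ = θ b₂ → b₁ = b₂ := by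
    intro b₁ b₂ h₁ h₂ he
    rcases tri b₁ with rfl | rfl | ⟨n1, n2⟩ <;> rcases tri b₂ with rfl | rfl | ⟨m1, m2⟩
    · rfl
    · exfalso; rw [θu, θv] at he; exact hwc he
    · exfalso; rw [θu, θval _ m1 m2] at he; exact retw b₂ h₂ m1 m2 he.symm
    · exfalso; rw [θv, θu] at he; exact hwc he.symm
    · rfl
    · exfalso; rw [θv, θval _ m1 m2] at he; exact retc b₂ h₂ m1 m2 he.symm
    · exfalso; rw [θval _ n1 n2, θu] at he; exact retw b₁ h₁ n1 n2 he
    · exfalso; rw [θval _ n1 n2, θv] at he; exact retc b₁ h₁ n1 n2 he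
    · rw [θval _ n1 n2, θval _ m1 m2] at he; exact he
  have key : ∀ b : {b : N.V // N.E x.1 b}, ∃ b' : {y : d.T.V // d.T.E x y},
      b'.1.1 = θ b.1 := by
    rintro ⟨b, hb⟩
    rcases tri b with rfl | rfl | ⟨n1, n2⟩
    · exact ⟨⟨⟨w, hwu, hwv⟩, Or.inr (Or.inl ⟨hb, huw⟩)⟩, θu.symm⟩
    · exact ⟨⟨⟨c, d.hcu, d.hcv⟩, Or.inr (Or.inr ⟨hb, d.hvc⟩)⟩, θv.symm⟩
    · exact ⟨⟨⟨b, n1, n2⟩, Or.inl hb⟩, (θval _ n1 n2).symm⟩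
  choose f hf using key
  have finj : Function.Injective f := by
    intro b₁ b₂ h
    apply Subtype.ext
    apply θinj _ _ b₁.2 b₂.2
    rw [← hf b₁, ← hf b₂, h]
  have fsurj : Function.Surjective f := by
    rintro ⟨b', hb'⟩
    rcases hb' with h | ⟨h1, h2⟩ | ⟨h1, h2⟩
    · refine ⟨⟨b'.1, h⟩, ?_⟩
      apply Subtype.ext; apply Subtype.ext
      rw [hf ⟨b'.1, h⟩, θval _ b'.2.1 b'.2.2]
    · have hbw : b'.1 = w := by
        rcases hcuspec b'.1 h2 with h3 | h3
        · exact absurd h3 b'.2.2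
        · exact h3
      refine ⟨⟨u, h1⟩, ?_⟩
      apply Subtype.ext; apply Subtype.ext
      rw [hf ⟨u, h1⟩, θu, hbw]
    · have hbc : b'.1 = c := d.hchildv b'.1 h2
      refine ⟨⟨v, h1⟩, ?_⟩
      apply Subtype.ext; apply Subtype.ext
      rw [hf ⟨v, h1⟩, θv, hbc]
  exact (Nat.card_congr (Equiv.ofBijective f ⟨finj, fsurj⟩)).symm

lemma T_indeg (d : DelCtx N u v p c) (x : d.T.V) : indeg d.T.E x = indeg N.E x.1 := by
  classical
  obtain ⟨pu, hpuu, hpuspec⟩ := indeg_one_parent d.hsu.1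
  have hpuune : pu ≠ u := d.hac.edge_ne hpuu
  have hpuv : pu ≠ v := fun h => d.hac.not_rev d.huv (h ▸ hpuu)
  set θ : N.V → N.V := fun a => if a = u then pu else if a = v then p else a with hθ
  have θval : ∀ b, b ≠ u → b ≠ v → θ b = b := fun b h1 h2 => by simp [hθ, h1, h2]
  have θu : θ u = pu := by simp [hθ]
  have θv : θ v = p := by simp [hθ, d.huvne.symm]
  have tri : ∀ b : N.V, b = u ∨ b = v ∨ (b ≠ u ∧ b ≠ v) := by tauto
  have θinj : ∀ a₁ a₂, N.E a₁ x.1 → N.E a₂ x.1 → θ a₁ = θ a₂ → a₁ = a₂ := by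
    intro a₁ a₂ h₁ h₂ he
    by_contra hne
    have : IsRetic N.E x.1 := retic_of_two_parents d.hN h₁ h₂ hne
    exact x.2.2 (retic_unique d.h1 this d.hretv)
  have key : ∀ a : {a : N.V // N.E a x.1}, ∃ a' : {y : d.T.V // d.T.E y x},
      a'.1.1 = θ a.1 := by
    rintro ⟨a, ha⟩
    rcases tri a with rfl | rfl | ⟨n1, n2⟩
    · exact ⟨⟨⟨pu, hpuune, hpuv⟩, Or.inr (Or.inl ⟨hpuu, ha⟩)⟩, θu.symm⟩
    · exact ⟨⟨⟨p, d.hpu, d.hpvne⟩, Or.inr (Or.inr ⟨d.hpv, ha⟩)⟩, θv.symm⟩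
    · exact ⟨⟨⟨a, n1, n2⟩, Or.inl ha⟩, (θval _ n1 n2).symm⟩
  choose f hf using key
  have finj : Function.Injective f := by
    intro a₁ a₂ h
    apply Subtype.ext
    apply θinj _ _ a₁.2 a₂.2
    rw [← hf a₁, ← hf a₂, h]
  have fsurj : Function.Surjective f := by
    rintro ⟨a', ha'⟩
    rcases ha' with h | ⟨h1, h2⟩ | ⟨h1, h2⟩
    · refine ⟨⟨a'.1, h⟩, ?_⟩
      apply Subtype.ext; apply Subtype.ext
      rw [hf ⟨a'.1, h⟩, θval _ a'.2.1 a'.2.2]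
    · have hap : a'.1 = pu := hpuspec a'.1 h1
      refine ⟨⟨u, h2⟩, ?_⟩
      apply Subtype.ext; apply Subtype.ext
      rw [hf ⟨u, h2⟩, θu, hap]
    · have hap : a'.1 = p := by
        rcases d.hparents a'.1 h1 with h3 | h3
        · exact absurd h3 a'.2.1
        · exact h3
      refine ⟨⟨v, h2⟩, ?_⟩
      apply Subtype.ext; apply Subtype.ext
      rw [hf ⟨v, h2⟩, θv, hap]
  exact (Nat.card_congr (Equiv.ofBijective f ⟨finj, fsurj⟩)).symm


lemma T_isTree (d : DelCtx N u v p c) : IsTree d.T := by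
  have hroot : ∀ x : d.T.V, IsRoot d.T.E x ↔ IsRoot N.E x.1 := fun x => by
    unfold IsRoot; rw [d.T_indeg, d.T_outdeg]
  have hleaf : ∀ x : d.T.V, IsLeafNode d.T.E x ↔ IsLeafNode N.E x.1 := fun x => by
    unfold IsLeafNode; rw [d.T_indeg, d.T_outdeg]
  have hsplit : ∀ x : d.T.V, IsSplit d.T.E x ↔ IsSplit N.E x.1 := fun x => by
    unfold IsSplit; rw [d.T_indeg, d.T_outdeg]
  have hret : ∀ x : d.T.V, IsRetic d.T.E x ↔ IsRetic N.E x.1 := fun x => by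
    unfold IsRetic; rw [d.T_indeg, d.T_outdeg]
  constructor
  · refine ⟨?_, ?_, ?_, ?_, ?_⟩
    · intro a ha
      refine d.hac a.1 (transGen_lift_trans Subtype.val (fun x y h => ?_) ha)
      rcases (d.TE_iff x y).mp h with h | ⟨h1, h2⟩ | ⟨h1, h2⟩
      · exact Relation.TransGen.single h
      · exact (Relation.TransGen.single h1).trans (Relation.TransGen.single h2)
      · exact (Relation.TransGen.single h1).trans (Relation.TransGen.single h2)
    · obtain ⟨ρ, hρ, hρu⟩ := d.hN.root_unique
      have hρne : ρ ≠ u ∧ ρ ≠ v := by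
        constructor
        · intro h
          subst h
          have h2 := d.hsu.1
          rw [hρ.1] at h2
          omega
        · intro h
          subst h
          have h2 := d.hretv.1
          rw [hρ.1] at h2
          omega
      exact ⟨⟨ρ, hρne⟩, (hroot _).mpr hρ, fun y hy => Subtype.ext (hρu y.1 ((hroot y).mp hy))⟩
    · intro x y hxy
      exact d.hN.lab_inj (congrArg Subtype.val hxy)
    · intro x
      rw [hleaf x, d.hN.leaf_iff x.1]
      constructor
      · rintro ⟨y, hy⟩
        exact ⟨y, Subtype.ext hy⟩
      · rintro ⟨y, rfl⟩
        exact ⟨y, rfl⟩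
    · intro x
      rcases d.hN.node_types x.1 with h|h|h|h
      · exact Or.inl ((hroot x).mpr h)
      · exact Or.inr (Or.inl ((hleaf x).mpr h))
      · exact Or.inr (Or.inr (Or.inl ((hsplit x).mpr h)))
      · exact Or.inr (Or.inr (Or.inr ((hret x).mpr h)))
  · have he : IsEmpty {x : d.T.V // IsRetic d.T.E x} := ⟨fun z => by
      have hz : IsRetic N.E z.1.1 := (hret z.1).mp z.2
      exact z.1.2.2 (retic_unique d.h1 hz d.hretv)⟩
    exact @Nat.card_of_isEmpty _ he

lemma T_subdiv (d : DelCtx N u v p c) :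
    IsSubdivision d.T.E (fun a b => N.E a b ∧ (a, b) ≠ (u, v)) (fun x : d.T.V => x.1) := by
  have hrange : ∀ z : N.V, z ∈ Set.range (fun x : d.T.V => x.1) ↔ (z ≠ u ∧ z ≠ v) := by
    intro z
    constructor
    · rintro ⟨a, rfl⟩
      exact a.2
    · intro h
      exact ⟨⟨z, h⟩, rfl⟩
  refine ⟨fun a b h => Subtype.ext h, ?_, ?_⟩
  · intro z hz
    have hz2 : z = u ∨ z = v := by
      by_contra h
      push_neg at h
      exact hz ((hrange z).mpr h)
    obtain ⟨w, huw, hwv, hcuspec⟩ := split_other_child d.hsu d.huv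
    rcases hz2 with h | h
    · subst h
      constructor
      · have heq : indeg (fun a b => N.E a b ∧ (a, b) ≠ (z, v)) z = indeg N.E z :=
          indeg_congr (fun a =>
            ⟨And.left, fun h => ⟨h, fun he => d.huvne (congrArg Prod.snd he)⟩⟩)
        rw [heq]
        exact d.hsu.1
      · refine card_eq_one_of (a := w) ⟨huw, fun he => hwv (congrArg Prod.snd he)⟩ ?_
        rintro b ⟨hb, hbne⟩
        rcases hcuspec b hb with h2 | h2
        · rw [h2] at hbne
          exact absurd rfl hbne
        · exact h2
    · subst h
      constructor
      · refine card_eq_one_of (a := p) ⟨d.hpv, fun he => d.hpu (congrArg Prod.fst he)⟩ ?_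
        rintro a ⟨ha, hane⟩
        rcases d.hparents a ha with h2 | h2
        · rw [h2] at hane
          exact absurd rfl hane
        · exact h2
      · have heq : outdeg (fun a b => N.E a b ∧ (a, b) ≠ (u, z)) z = outdeg N.E z :=
          outdeg_congr (fun b =>
            ⟨And.left, fun h => ⟨h, fun he => d.huvne (congrArg Prod.fst he).symm⟩⟩)
        rw [heq]
        exact d.hretv.2
  · intro a b
    constructor
    · intro hab
      rcases (d.TE_iff a b).mp hab with h | ⟨h1, h2⟩ | ⟨h1, h2⟩
      · exact ⟨[], List.Chain.cons ⟨h, fun he => a.2.1 (congrArg Prod.fst he)⟩ List.Chain.nil,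
          by simp⟩
      · refine ⟨[u], ?_, ?_⟩
        · exact List.Chain.cons ⟨h1, fun he => d.huvne (congrArg Prod.snd he)⟩
            (List.Chain.cons ⟨h2, fun he => b.2.2 (congrArg Prod.snd he)⟩ List.Chain.nil)
        · intro z hz
          simp only [List.mem_singleton] at hz
          subst hz
          intro hmem
          exact ((hrange z).mp hmem).1 rfl
      · refine ⟨[v], ?_, ?_⟩
        · exact List.Chain.cons ⟨h1, fun he => a.2.1 (congrArg Prod.fst he)⟩
            (List.Chain.cons ⟨h2, fun he => d.huvne (congrArg Prod.fst he).symm⟩ List.Chain.nil)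
        · intro z hz
          simp only [List.mem_singleton] at hz
          subst hz
          intro hmem
          exact ((hrange z).mp hmem).2 rfl
    · rintro ⟨l, hc, hav⟩
      have hmem : ∀ z ∈ l, z = u ∨ z = v := by
        intro z hz
        by_contra hcon
        push_neg at hcon
        exact hav z hz ((hrange z).mpr hcon)
      refine (d.TE_iff a b).mpr ?_
      cases l with
      | nil =>
        exact Or.inl (List.chain_cons.mp hc).1.1
      | cons z t =>
        cases t with
        | nil =>
          have h1 := (List.chain_cons.mp hc).1
          have h2 := (List.chain_cons.mp (List.chain_cons.mp hc).2).1
          rcases hmem z (by simp) with rfl | rfl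
          · exact Or.inr (Or.inl ⟨h1.1, h2.1⟩)
          · exact Or.inr (Or.inr ⟨h1.1, h2.1⟩)
        | cons z₂ t₂ =>
          exfalso
          have h1 := (List.chain_cons.mp (List.chain_cons.mp hc).2).1
          rcases hmem z (by simp) with rfl | rfl <;> rcases hmem z₂ (by simp) with rfl | rfl
          · exact d.hac.not_self h1.1
          · exact h1.2 rfl
          · exact d.hac.not_rev d.huv h1.1
          · exact d.hac.not_self h1.1

lemma T_embedded (d : DelCtx N u v p c) : EmbeddedTree d.T N :=
  ⟨d.T_isTree, fun a b => N.E a b ∧ (a, b) ≠ (u, v), fun x : d.T.V => x.1,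
    fun _ _ h => h.1, d.T_subdiv, fun _ => rfl⟩

/-- Swapped context: the other parent. -/
lemma swap (d : DelCtx N u v p c) (hsp : IsSplit N.E p) : DelCtx N p v u c :=
  ⟨d.hN, d.h1, d.hpv, d.huv, Ne.symm d.hpu, d.hvc, hsp⟩

lemma classification (d : DelCtx N u v p c) (hsp : IsSplit N.E p)
    {T' : Net X} (hT' : EmbeddedTree T' N) :
    ∃ (E'' : N.V → N.V → Prop) (φ : T'.V → N.V), IsSubdivision T'.E E'' φ ∧
      (∀ x, φ (T'.lab x) = N.lab x) ∧
      ((∀ a b, E'' a b ↔ (N.E a b ∧ (a, b) ≠ (u, v))) ∨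
       (∀ a b, E'' a b ↔ (N.E a b ∧ (a, b) ≠ (p, v)))) := by
  obtain ⟨hT'tree, E'', φ, hsubE, ⟨hinj, hred, hiff⟩, hlab⟩ := hT'
  obtain ⟨ρ, hρ, hρu⟩ := d.hN.root_unique
  have hrootzero : ∀ (y : N.V), (∀ a, ¬ E'' a y) → y = ρ := by
    have rootpre : ∀ (y : N.V), (∀ a, ¬ E'' a y) → y ∈ Set.range φ →
        ∃ b : T'.V, φ b = y ∧ IsRoot T'.E b := by
      rintro y hy ⟨b, rfl⟩
      refine ⟨b, rfl, ?_⟩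
      have hFz : ∀ a, ¬ T'.E a b := by
        intro a ha
        obtain ⟨l, hcc, hl⟩ := (hiff a b).mp ha
        obtain ⟨z, hz⟩ := chain_last hcc
        exact hy z hz
      have hb0 : indeg T'.E b = 0 := @Nat.card_of_isEmpty _ ⟨fun z => hFz z.1 z.2⟩
      rcases hT'tree.1.node_types b with h|h|h|h
      · exact h
      · exfalso; have h1 := h.1; rw [hb0] at h1; exact absurd h1 (by omega)
      · exfalso; have h1 := h.1; rw [hb0] at h1; exact absurd h1 (by omega)
      · exfalso; have h1 := h.1; rw [hb0] at h1; exact absurd h1 (by omega)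
    have hrange : ∀ (y : N.V), (∀ a, ¬ E'' a y) → y ∈ Set.range φ := by
      intro y hy
      by_contra h
      obtain ⟨a, ha⟩ := exists_of_card_eq_one (hred y h).1
      exact hy a ha
    have hρrange : ∀ a, ¬ E'' a ρ := by
      intro a ha
      exact not_of_card_eq_zero hρ.1 a (hsubE _ _ ha)
    obtain ⟨b₀, hb₀, hb₀root⟩ := rootpre ρ hρrange (hrange ρ hρrange)
    obtain ⟨bρ, hbρu⟩ := hT'tree.1.root_unique
    intro y hy
    obtain ⟨b, hb, hbroot⟩ := rootpre y hy (hrange y hy)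
    have e1 : b = bρ := hbρu.2 b hbroot
    have e2 : b₀ = bρ := hbρu.2 b₀ hb₀root
    rw [← hb, e1, ← e2, hb₀]
  have s1 : ∀ x y, N.E x y → y ≠ v → E'' x y := by
    intro x y hxy hyv
    by_contra hne
    have hy1 : indeg N.E y = 1 := by
      rcases d.hN.node_types y with h|h|h|h
      · exact absurd hxy (not_of_card_eq_zero h.1 x)
      · exact h.1
      · exact h.1
      · exact absurd (retic_unique d.h1 h d.hretv) hyv
    have hnoin : ∀ a, ¬ E'' a y := by
      intro a ha
      have : a = x := eq_of_card_eq_one hy1 (hsubE _ _ ha) hxy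
      subst this
      exact hne ha
    have hyρ : y = ρ := hrootzero y hnoin
    subst hyρ
    exact not_of_card_eq_zero hρ.1 x hxy
  have hnotboth : ¬ (E'' u v ∧ E'' p v) := by
    rintro ⟨h₂u, h₂p⟩
    by_cases hvr : v ∈ Set.range φ
    · obtain ⟨b, hb⟩ := hvr
      obtain ⟨w, huw, hwv, _⟩ := split_other_child d.hsu d.huv
      have hEuw : E'' u w := s1 u w huw hwv
      have hur : u ∈ Set.range φ := by
        by_contra h
        exact hwv (eq_of_card_eq_one (hred u h).2 h₂u hEuw).symm
      obtain ⟨au, hau⟩ := hur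
      obtain ⟨wp, hpw, hwpv, _⟩ := split_other_child hsp d.hpv
      have hEpw : E'' p wp := s1 p wp hpw hwpv
      have hpr : p ∈ Set.range φ := by
        by_contra h
        exact hwpv (eq_of_card_eq_one (hred p h).2 h₂p hEpw).symm
      obtain ⟨ap, hap⟩ := hpr
      have hFu : T'.E au b := (hiff au b).mpr
        ⟨[], by rw [hau, hb]; exact List.Chain.cons h₂u List.Chain.nil, by simp⟩
      have hFp : T'.E ap b := (hiff ap b).mpr
        ⟨[], by rw [hap, hb]; exact List.Chain.cons h₂p List.Chain.nil, by simp⟩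
      have hane : au ≠ ap := by
        intro hh
        apply d.hpu
        have heq : φ au = φ ap := by rw [hh]
        rw [hau, hap] at heq
        exact heq.symm
      have : IsRetic T'.E b := retic_of_two_parents hT'tree.1 hFu hFp hane
      exact not_of_card_eq_zero hT'tree.2 b this
    · exact d.hpu (eq_of_card_eq_one (hred v hvr).1 h₂u h₂p).symm
  have hnotneither : E'' u v ∨ E'' p v := by
    by_contra hcon
    push_neg at hcon
    have hnoin : ∀ a, ¬ E'' a v := by
      intro a ha
      rcases d.hparents a (hsubE _ _ ha) with rfl | rfl
      · exact hcon.1 ha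
      · exact hcon.2 ha
    have hvρ : v = ρ := hrootzero v hnoin
    exact not_of_card_eq_zero hρ.1 u (hvρ ▸ d.huv)
  refine ⟨E'', φ, ⟨hinj, hred, hiff⟩, hlab, ?_⟩
  rcases hnotneither with h | h
  · right
    intro a b
    constructor
    · intro hab
      refine ⟨hsubE _ _ hab, fun he => ?_⟩
      have e1 : a = p := congrArg Prod.fst he
      have e2 : b = v := congrArg Prod.snd he
      subst e1; subst e2
      exact hnotboth ⟨h, hab⟩
    · rintro ⟨hab, hne⟩
      by_cases hbv : b = v
      · subst hbv
        rcases d.hparents a hab with rfl | rfl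
        · exact h
        · exact absurd rfl hne
      · exact s1 a b hab hbv
  · left
    intro a b
    constructor
    · intro hab
      refine ⟨hsubE _ _ hab, fun he => ?_⟩
      have e1 : a = u := congrArg Prod.fst he
      have e2 : b = v := congrArg Prod.snd he
      subst e1; subst e2
      exact hnotboth ⟨hab, h⟩
    · rintro ⟨hab, hne⟩
      by_cases hbv : b = v
      · subst hbv
        rcases d.hparents a hab with rfl | rfl
        · exact absurd rfl hne
        · exact h
      · exact s1 a b hab hbv

lemma embedded_unique (d : DelCtx N u v p c) (hsp : IsSplit N.E p)
    {T' : Net X} (hT' : EmbeddedTree T' N) :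
    NetIso T' d.T ∨ NetIso T' ((d.swap hsp).T) := by
  obtain ⟨E'', φ, hsub, hlab, hcase⟩ := d.classification hsp hT'
  have hT'tree : IsTree T' := hT'.1
  rcases hcase with hc | hc
  · left
    have he : E'' = fun a b => N.E a b ∧ (a, b) ≠ (u, v) :=
      funext fun a => funext fun b => propext (hc a b)
    rw [he] at hsub
    exact subdiv_unique hT'tree d.T_isTree (Acyclic.sub (fun a b h => h.1) d.hac)
      hsub d.T_subdiv hlab (fun _ => rfl)
  · right
    have he : E'' = fun a b => N.E a b ∧ (a, b) ≠ (p, v) :=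
      funext fun a => funext fun b => propext (hc a b)
    rw [he] at hsub
    exact subdiv_unique hT'tree (d.swap hsp).T_isTree (Acyclic.sub (fun a b h => h.1) d.hac)
      hsub (d.swap hsp).T_subdiv hlab (fun _ => rfl)

end DelCtx
end Del

/-! ### The two deletions give isomorphic trees (triangle case) -/

section Final
open Relation

variable {X : Type}

lemma swap_iso {N : Net X} {u v p c : N.V} (d : DelCtx N u v p c)
    (hsp : IsSplit N.E p) (hadj : N.E u p) : NetIso d.T ((d.swap hsp).T) := by
  classical
  have hup : u ≠ p := Ne.symm d.hpu
  have hpune : ¬ N.E p u := d.hac.not_rev hadj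
  have hvpne : ¬ N.E v p := d.hac.not_rev d.hpv
  have hvune : ¬ N.E v u := d.hac.not_rev d.huv
  have hchildu : ∀ b, N.E u b → b = v ∨ b = p := by
    obtain ⟨w, huw, hwv, hspec⟩ := split_other_child d.hsu d.huv
    have hpw : p = w := by
      rcases hspec p hadj with h|h
      · exact absurd h d.hpvne
      · exact h
    intro b hb
    rcases hspec b hb with h|h
    · exact Or.inl h
    · exact Or.inr (h.trans hpw.symm)
  have hparp : ∀ a, N.E a p → a = u := fun a ha => eq_of_card_eq_one hsp.1 ha hadj
  set f : d.T.V → ((d.swap hsp).T).V :=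
    fun x => if h : x.1 = p then ⟨u, hup, d.huvne⟩ else ⟨x.1, h, x.2.2⟩ with hf
  set g : ((d.swap hsp).T).V → d.T.V :=
    fun y => if h : y.1 = u then ⟨p, d.hpu, d.hpvne⟩ else ⟨y.1, h, y.2.2⟩ with hg
  have hfp : ∀ (x : d.T.V), x.1 = p → (f x).1 = u := by
    intro x h; simp [hf, h]
  have hfn : ∀ (x : d.T.V), x.1 ≠ p → (f x).1 = x.1 := by
    intro x h; simp [hf, h]
  have hlinv : ∀ x, g (f x) = x := by
    intro x
    by_cases h : x.1 = p
    · have h1 : (f x).1 = u := hfp x h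
      apply Subtype.ext
      simp [hg, h1, h]
    · have h1 : (f x).1 = x.1 := hfn x h
      apply Subtype.ext
      simp [hg, h1, x.2.1]
  have hrinv : ∀ y, f (g y) = y := by
    intro y
    by_cases h : y.1 = u
    · have h1 : (g y).1 = p := by simp [hg, h]
      apply Subtype.ext
      rw [hfp _ h1, h]
    · have h1 : (g y).1 = y.1 := by simp [hg, h]
      apply Subtype.ext
      rw [hfn _ (by rw [h1]; exact y.2.1), h1]
  refine ⟨⟨f, g, hlinv, hrinv⟩, ?_, ?_⟩
  · intro a b
    show d.T.E a b ↔ ((d.swap hsp).T).E (f a) (f b)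
    rw [d.TE_iff a b, (d.swap hsp).TE_iff (f a) (f b)]
    by_cases ha : a.1 = p <;> by_cases hb : b.1 = p
    · rw [hfp a ha, hfp b hb, ha, hb]
      constructor
      · rintro (h | ⟨h1, h2⟩ | ⟨h1, h2⟩)
        · exact absurd h (d.hac.not_self)
        · exact absurd h1 hpune
        · exact absurd h2 hvpne
      · rintro (h | ⟨h1, h2⟩ | ⟨h1, h2⟩)
        · exact absurd h (d.hac.not_self)
        · exact absurd h2 hpune
        · exact absurd h2 hvune
    · rw [hfp a ha, hfn b hb, ha]
      constructor
      · rintro (h | ⟨h1, h2⟩ | ⟨h1, h2⟩)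
        · exact Or.inr (Or.inl ⟨hadj, h⟩)
        · exact absurd h1 hpune
        · exact Or.inr (Or.inr ⟨d.huv, h2⟩)
      · rintro (h | ⟨h1, h2⟩ | ⟨h1, h2⟩)
        · rcases hchildu b.1 h with h2|h2
          · exact absurd h2 b.2.2
          · exact absurd h2 hb
        · exact Or.inl h2
        · exact Or.inr (Or.inr ⟨d.hpv, h2⟩)
    · rw [hfn a ha, hfp b hb, hb]
      constructor
      · rintro (h | ⟨h1, h2⟩ | ⟨h1, h2⟩)
        · exact absurd (hparp a.1 h) a.2.1
        · exact Or.inl h1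
        · exact absurd h2 hvpne
      · rintro (h | ⟨h1, h2⟩ | ⟨h1, h2⟩)
        · exact Or.inr (Or.inl ⟨h, hadj⟩)
        · exact absurd h2 hpune
        · exact absurd h2 hvune
    · rw [hfn a ha, hfn b hb]
      constructor
      · rintro (h | ⟨h1, h2⟩ | ⟨h1, h2⟩)
        · exact Or.inl h
        · rcases hchildu b.1 h2 with h3|h3
          · exact absurd h3 b.2.2
          · exact absurd h3 hb
        · rcases d.hparents a.1 h1 with h3|h3
          · exact absurd h3 a.2.1
          · exact absurd h3 ha
      · rintro (h | ⟨h1, h2⟩ | ⟨h1, h2⟩)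
        · exact Or.inl h
        · exact absurd (hparp a.1 h1) a.2.1
        · rcases d.hparents a.1 h1 with h3|h3
          · exact absurd h3 a.2.1
          · exact absurd h3 ha
  · intro x
    have hlabp : N.lab x ≠ p := ((d.swap hsp).hlab x).1
    apply Subtype.ext
    show (f (d.T.lab x)).1 = N.lab x
    exact hfn (d.T.lab x) hlabp

/-! ### The head move preserves the suppressed tree -/

lemma bridge_iso {M : Net X} {u v p c s₀ t₀ : M.V}
    (hst : M.E s₀ t₀) (d : DelCtx M u v p c)
    (d₀ : DelCtx (Net.mk M.V M.fin (headMoveEdges M.E u v p c s₀ t₀) M.lab) u v s₀ t₀) :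
    NetIso d.T d₀.T := by
  classical
  have hs₀u : s₀ ≠ u := d₀.hpu
  have hs₀v : s₀ ≠ v := d₀.hpvne
  have ht₀v : t₀ ≠ v := d₀.hcv
  have ht₀u : t₀ ≠ u := d₀.hcu
  set H := headMoveEdges M.E u v p c s₀ t₀ with hH
  have hHab : ∀ a b : M.V, a ≠ u → a ≠ v → b ≠ u → b ≠ v →
      (H a b ↔ ((M.E a b ∧ (a, b) ≠ (s₀, t₀)) ∨ (a = p ∧ b = c))) := by
    intro a b hau hav hbu hbv
    constructor
    · rintro (⟨he, h1, h2, h3, h4⟩ | he | he | he | he)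
      · exact Or.inl ⟨he, h3⟩
      · exact Or.inr ⟨congrArg Prod.fst he, congrArg Prod.snd he⟩
      · exact absurd (congrArg Prod.snd he) hbv
      · exact absurd (congrArg Prod.fst he) hav
      · exact absurd (congrArg Prod.snd he) hbv
    · rintro (⟨he, h3⟩ | ⟨h1, h2⟩)
      · refine Or.inl ⟨he, ?_, ?_, h3, ?_⟩
        · intro hc; exact hbv (congrArg Prod.snd hc)
        · intro hc; exact hav (congrArg Prod.fst hc)
        · intro hc; exact hbv (congrArg Prod.snd hc)
      · exact Or.inr (Or.inl (by rw [h1, h2]))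
  have hHau : ∀ a : M.V, a ≠ u → a ≠ v → (H a u ↔ M.E a u) := by
    intro a hau hav
    constructor
    · rintro (⟨he, h1, h2, h3, h4⟩ | he | he | he | he)
      · exact he
      · exact absurd (congrArg Prod.snd he) (Ne.symm d.hcu)
      · exact absurd (congrArg Prod.snd he) d.huvne
      · exact absurd (congrArg Prod.snd he) (Ne.symm ht₀u)
      · exact absurd (congrArg Prod.snd he) d.huvne
    · intro he
      refine Or.inl ⟨he, ?_, ?_, ?_, ?_⟩
      · intro hc; exact d.huvne (congrArg Prod.snd hc)
      · intro hc; exact hav (congrArg Prod.fst hc)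
      · intro hc; exact ht₀u (congrArg Prod.snd hc).symm
      · intro hc; exact d.huvne (congrArg Prod.snd hc)
  have hHub : ∀ b : M.V, b ≠ u → b ≠ v → (H u b ↔ M.E u b) := by
    intro b hbu hbv
    constructor
    · rintro (⟨he, h1, h2, h3, h4⟩ | he | he | he | he)
      · exact he
      · exact absurd (congrArg Prod.fst he) d.hpu.symm
      · exact absurd (congrArg Prod.fst he) hs₀u.symm
      · exact absurd (congrArg Prod.fst he) d.huvne
      · exact absurd (congrArg Prod.snd he) hbv
    · intro he
      refine Or.inl ⟨he, ?_, ?_, ?_, ?_⟩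
      · intro hc; exact hbv (congrArg Prod.snd hc)
      · intro hc; exact d.huvne (congrArg Prod.fst hc)
      · intro hc; exact hs₀u (congrArg Prod.fst hc).symm
      · intro hc; exact hbv (congrArg Prod.snd hc)
  have hHav : ∀ a : M.V, a ≠ u → a ≠ v → (H a v ↔ a = s₀) := by
    intro a hau hav
    constructor
    · rintro (⟨he, h1, h2, h3, h4⟩ | he | he | he | he)
      · exfalso
        rcases d.hparents a he with h|h
        · exact hau h
        · rw [h] at h1; exact h1 rfl
      · exact absurd (congrArg Prod.snd he) d.hcv.symm
      · exact congrArg Prod.fst he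
      · exact absurd (congrArg Prod.fst he) hav
      · exact absurd (congrArg Prod.fst he) hau
    · intro he
      exact Or.inr (Or.inr (Or.inl (by rw [he])))
  have hHvb : ∀ b : M.V, b ≠ u → b ≠ v → (H v b ↔ b = t₀) := by
    intro b hbu hbv
    constructor
    · rintro (⟨he, h1, h2, h3, h4⟩ | he | he | he | he)
      · exfalso
        have := d.hchildv b he
        rw [this] at h2
        exact h2 rfl
      · exact absurd (congrArg Prod.fst he) d.hpvne.symm
      · exact absurd (congrArg Prod.snd he) hbv
      · exact congrArg Prod.snd he
      · exact absurd (congrArg Prod.fst he) d.huvne.symm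
    · intro he
      exact Or.inr (Or.inr (Or.inr (Or.inl (by rw [he]))))
  refine ⟨Equiv.refl _, ?_, ?_⟩
  · intro a b
    show d.T.E a b ↔ d₀.T.E a b
    rw [d.TE_iff a b, d₀.TE_iff a b]
    show _ ↔ (H a.1 b.1 ∨ (H a.1 u ∧ H u b.1) ∨ (H a.1 v ∧ H v b.1))
    rw [hHab a.1 b.1 a.2.1 a.2.2 b.2.1 b.2.2, hHau a.1 a.2.1 a.2.2, hHub b.1 b.2.1 b.2.2,
        hHav a.1 a.2.1 a.2.2, hHvb b.1 b.2.1 b.2.2]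
    constructor
    · rintro (h | ⟨h1, h2⟩ | ⟨h1, h2⟩)
      · by_cases hst' : (a.1, b.1) = (s₀, t₀)
        · exact Or.inr (Or.inr ⟨congrArg Prod.fst hst', congrArg Prod.snd hst'⟩)
        · exact Or.inl (Or.inl ⟨h, hst'⟩)
      · exact Or.inr (Or.inl ⟨h1, h2⟩)
      · have hap : a.1 = p := by
          rcases d.hparents a.1 h1 with h3|h3
          · exact absurd h3 a.2.1
          · exact h3
        exact Or.inl (Or.inr ⟨hap, d.hchildv b.1 h2⟩)
    · rintro ((⟨h, _⟩ | ⟨hap, hbc⟩) | ⟨h1, h2⟩ | ⟨has, hbt⟩)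
      · exact Or.inl h
      · exact Or.inr (Or.inr ⟨by rw [hap]; exact d.hpv, by rw [hbc]; exact d.hvc⟩)
      · exact Or.inr (Or.inl ⟨h1, h2⟩)
      · exact Or.inl (by rw [has, hbt]; exact hst)
  · intro x
    exact Subtype.ext rfl

end Final

/-- if tier-1 networks `M` and `M'` each contain a triangle and `M'` is
obtained from `M` by a single head move, then `M` and `M'` have the same unique
embedded tree. -/
theorem tier1_triangle_head_move_same_tree {X : Type} (M M' : Net X)
    (h1 : reticCount M.E = 1) (h1' : reticCount M'.E = 1)
    (hΔ : HasTriangle M.E) (hΔ' : HasTriangle M'.E)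
    (h : HeadMoveStep M M') :
    ∃ T : Net X, EmbeddedTree T M ∧ EmbeddedTree T M' ∧
      ∀ T' : Net X, (EmbeddedTree T' M ∨ EmbeddedTree T' M') → NetIso T' T := by
  classical
  obtain ⟨hMv, hM'v, u, v, p, c, s₀, t₀, huv, hpv, hpu, hvc, hst, hiso⟩ := h
  set M₀ : Net X := ⟨M.V, M.fin, headMoveEdges M.E u v p c s₀ t₀, M.lab⟩ with hM₀def
  have hisoM₀ : NetIso M₀ M' := hiso
  have hM₀v : M₀.valid := LabIso.isPhyloNet (NetIso.symm hisoM₀) hM'v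
  have h1₀ : reticCount M₀.E = 1 := by
    rw [← LabIso.reticCount_eq hisoM₀]
    exact h1'
  -- structure of M
  have hretv : IsRetic M.E v := retic_of_two_parents hMv huv hpv (Ne.symm hpu)
  obtain ⟨t, s, r, c', hts, htr, hsr, hretr, hsplt, hspls, hrc⟩ := triangle_struct hMv h1 hΔ
  have hvr : v = r := retic_unique h1 hretv hretr
  have hpar := parents_spec hretr htr hsr (hMv.acyclic.edge_ne hts)
  have hsplitu : IsSplit M.E u := by
    rcases hpar u (hvr ▸ huv) with h'|h' <;> rw [h']
    exacts [hsplt, hspls]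
  have hsplitp : IsSplit M.E p := by
    rcases hpar p (hvr ▸ hpv) with h'|h' <;> rw [h']
    exacts [hsplt, hspls]
  have hadj : M.E u p ∨ M.E p u := by
    rcases hpar u (hvr ▸ huv) with h'|h' <;> rcases hpar p (hvr ▸ hpv) with h2|h2
    · exact absurd (h2.trans h'.symm) hpu
    · exact Or.inl (by rw [h', h2]; exact hts)
    · exact Or.inr (by rw [h', h2]; exact hts)
    · exact absurd (h2.trans h'.symm) hpu
  have dM : DelCtx M u v p c := ⟨hMv, h1, huv, hpv, hpu, hvc, hsplitu⟩
  -- structure of M₀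
  have hHuv : M₀.E u v := Or.inr (Or.inr (Or.inr (Or.inr rfl)))
  have hHs₀v : M₀.E s₀ v := Or.inr (Or.inr (Or.inl rfl))
  have hHvt₀ : M₀.E v t₀ := Or.inr (Or.inr (Or.inr (Or.inl rfl)))
  have ht₀v : t₀ ≠ v := by
    intro hh
    exact hM₀v.acyclic.not_self (hh ▸ hHvt₀)
  have hret₀ : IsRetic M₀.E v := by
    rcases hM₀v.node_types v with hh|hh|hh|hh
    · exact absurd hHuv (not_of_card_eq_zero hh.1 u)
    · exact absurd hHvt₀ (not_of_card_eq_zero hh.2 t₀)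
    · exfalso
      have hout : ∀ b, M₀.E v b → b = t₀ := by
        intro b hb
        rcases hb with ⟨he, h1', h2', h3', h4'⟩ | he | he | he | he
        · have := dM.hchildv b he
          rw [this] at h2'
          exact absurd rfl h2'
        · exact absurd (congrArg Prod.fst he) (Ne.symm dM.hpvne)
        · have hs : v = s₀ := congrArg Prod.fst he
          exact absurd hHs₀v (by rw [← hs]; exact hM₀v.acyclic.not_self)
        · exact congrArg Prod.snd he
        · exact absurd (congrArg Prod.fst he) (Ne.symm dM.huvne)
      have hcard : outdeg M₀.E v = 1 := card_eq_one_of hHvt₀ hout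
      have h2 := hh.2
      omega
    · exact hh
  have hs₀u : s₀ ≠ u := by
    intro hh
    have hin : ∀ a, M₀.E a v → a = u := by
      intro a ha
      rcases ha with ⟨he, h1', h2', h3', h4'⟩ | he | he | he | he
      · rcases dM.hparents a he with h'|h'
        · exact h'
        · rw [h'] at h1'
          exact absurd rfl h1'
      · exact absurd (congrArg Prod.snd he) (Ne.symm dM.hcv)
      · exact (congrArg Prod.fst he).trans hh
      · exact absurd (congrArg Prod.snd he) (Ne.symm ht₀v)
      · exact congrArg Prod.fst he
    have hcard : indeg M₀.E v = 1 := card_eq_one_of hHuv hin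
    have h2 := hret₀.1
    omega
  have hsplit₀u : IsSplit M₀.E u := by
    obtain ⟨w, huw, hwv, hcusp⟩ := split_other_child hsplitu huv
    have hHuw : M₀.E u w := by
      left
      refine ⟨huw, ?_, ?_, ?_, ?_⟩
      · intro he; exact hpu (congrArg Prod.fst he).symm
      · intro he; exact dM.huvne (congrArg Prod.fst he)
      · intro he; exact hs₀u (congrArg Prod.fst he).symm
      · intro he; exact hwv (congrArg Prod.snd he)
    exact split_of_two_children hM₀v hHuv hHuw (Ne.symm hwv)
  have d₀ : DelCtx M₀ u v s₀ t₀ := ⟨hM₀v, h1₀, hHuv, hHs₀v, hs₀u, hHvt₀, hsplit₀u⟩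
  have hΔ₀ : HasTriangle M₀.E := LabIso.hasTriangle (NetIso.symm hisoM₀) hΔ'
  obtain ⟨t', s', r', c₀', hts', htr', hsr', hretr', hsplt', hspls', hrc'⟩ :=
    triangle_struct hM₀v h1₀ hΔ₀
  have hvr' : v = r' := retic_unique h1₀ hret₀ hretr'
  have hpar₀ := parents_spec hretr' htr' hsr' (hM₀v.acyclic.edge_ne hts')
  have hsplit₀s : IsSplit M₀.E s₀ := by
    rcases hpar₀ s₀ (hvr' ▸ hHs₀v) with h'|h' <;> rw [h']
    exacts [hsplt', hspls']
  have hadj₀ : M₀.E u s₀ ∨ M₀.E s₀ u := by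
    rcases hpar₀ u (hvr' ▸ hHuv) with h'|h' <;> rcases hpar₀ s₀ (hvr' ▸ hHs₀v) with h2|h2
    · exact absurd (h2.trans h'.symm) hs₀u
    · exact Or.inl (by rw [h', h2]; exact hts')
    · exact Or.inr (by rw [h', h2]; exact hts')
    · exact absurd (h2.trans h'.symm) hs₀u
  have hbridge : NetIso dM.T d₀.T := bridge_iso hst dM d₀
  have mergeM : ∀ {T' : Net X}, EmbeddedTree T' M → NetIso T' dM.T := by
    intro T' hT'
    rcases dM.embedded_unique hsplitp hT' with h'|h'
    · exact h'
    · refine NetIso.trans h' ?_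
      rcases hadj with ha|ha
      · exact (swap_iso dM hsplitp ha).symm
      · exact swap_iso (dM.swap hsplitp) hsplitu ha
  have mergeM₀ : ∀ {T' : Net X}, EmbeddedTree T' M₀ → NetIso T' d₀.T := by
    intro T' hT'
    rcases d₀.embedded_unique hsplit₀s hT' with h'|h'
    · exact h'
    · refine NetIso.trans h' ?_
      rcases hadj₀ with ha|ha
      · exact (swap_iso d₀ hsplit₀s ha).symm
      · exact swap_iso (d₀.swap hsplit₀s) hsplit₀u ha
  refine ⟨dM.T, dM.T_embedded, ?_, ?_⟩
  · have h₀ : EmbeddedTree d₀.T M₀ := d₀.T_embedded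
    have h₁ : EmbeddedTree d₀.T M' := h₀.transfer_net hisoM₀
    exact h₁.transfer_tree hbridge.symm
  · intro T' hT'
    rcases hT' with h'|h'
    · exact mergeM h'
    · have h₀ : EmbeddedTree T' M₀ := h'.transfer_net (NetIso.symm hisoM₀)
      exact NetIso.trans (mergeM₀ h₀) hbridge.symm

end Phylo
end
end
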